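/- arXiv:1909.05795 — 6 statements merged into one kernel-verified Lean document; each statement's English description precedes it below -/
import Mathlib

section
/- Let f ∈ Γ₀(ℝⁿ) and r > 0. Then f = e_r f + c for some constant c ∈ ℝ if and only if f is an affine function, i.e., f(x) = ⟨a, x⟩ + b for some a ∈ ℝⁿ, b ∈ ℝ. -/
open scoped RealInnerProductSpace

variable {E : Type*} [NormedAddCommGroup E] [InnerProductSpace ℝ E]

/-- slope bound from convexity + quadratic upper bound -/
lemma aux_slope (F : E → ℝ) (r c : ℝ) (hr : 0 < r) (hc0 : 0 ≤ c)
    (hconv : ∀ p q : E, ∀ θ : ℝ, 0 ≤ θ → θ ≤ 1 →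
      F (θ • p + (1 - θ) • q) ≤ θ * F p + (1 - θ) * F q)
    (hA : ∀ x y : E, F x ≤ F y + r / 2 * ‖x - y‖ ^ 2 + c) :
    ∀ x y : E, ∀ s : ℝ, 0 < s → F x - F y ≤ ‖x - y‖ * (r / 2 * s + c / s) := by
  intro x y s hs
  rcases eq_or_ne x y with rfl | hxy
  · simp only [sub_self, norm_zero, zero_mul]
    linarith
  have hd : (0:ℝ) < ‖x - y‖ := norm_pos_iff.mpr (sub_ne_zero.mpr hxy)
  set d := ‖x - y‖ with hdd
  set p := x + (s / d) • (x - y) with hp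
  have hps : ‖p - x‖ = s := by
    have : p - x = (s / d) • (x - y) := by rw [hp]; abel
    rw [this, norm_smul]
    simp only [Real.norm_eq_abs, abs_div, abs_of_pos hs, abs_of_pos hd, ← hdd]
    field_simp
  set θ := s / (d + s) with hθ
  have hθ0 : 0 ≤ θ := by positivity
  have hθ1 : θ ≤ 1 := by
    rw [hθ, div_le_one (by positivity)]; linarith
  have hid : θ • y + (1 - θ) • p = x := by
    rw [hp, hθ]
    have h1 : d + s ≠ 0 := by positivity
    have h2 : d ≠ 0 := ne_of_gt hd
    match_scalars <;> field_simp <;> ring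
  have hcv := hconv y p θ hθ0 hθ1
  rw [hid] at hcv
  have hAp : F p ≤ F x + r / 2 * s ^ 2 + c := by
    have := hA p x
    rwa [hps] at this
  have h1θ : 1 - θ = d / (d + s) := by rw [hθ]; field_simp; ring
  have hθpos : 0 < θ := by positivity
  have key : F x ≤ θ * F y + (1 - θ) * (F x + r / 2 * s ^ 2 + c) := by
    calc F x ≤ θ * F y + (1 - θ) * F p := hcv
    _ ≤ θ * F y + (1 - θ) * (F x + r / 2 * s ^ 2 + c) := by
        have h5 : (0:ℝ) ≤ 1 - θ := by linarith
        nlinarith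
  have h2 : θ * (F x - F y) ≤ (1 - θ) * (r / 2 * s ^ 2 + c) := by nlinarith
  have h3 : F x - F y ≤ ((1 - θ) * (r / 2 * s ^ 2 + c)) / θ :=
    (le_div_iff₀ hθpos).mpr (by linarith)
  calc F x - F y ≤ ((1 - θ) * (r / 2 * s ^ 2 + c)) / θ := h3
  _ = d * (r / 2 * s + c / s) := by
      rw [h1θ, hθ]
      have h1 : d + s ≠ 0 := by positivity
      field_simp

/-- Lipschitz bound with constant M where M² = 2rc -/
lemma aux_lip (F : E → ℝ) (r c M : ℝ) (hr : 0 < r) (hc : 0 < c)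
    (hM : M = Real.sqrt (2 * r * c))
    (hslope : ∀ x y : E, ∀ s : ℝ, 0 < s → F x - F y ≤ ‖x - y‖ * (r / 2 * s + c / s)) :
    ∀ x y : E, F x - F y ≤ M * ‖x - y‖ := by
  intro x y
  have hM0 : 0 < M := by rw [hM]; positivity
  have hM2 : M ^ 2 = 2 * r * c := by rw [hM]; rw [Real.sq_sqrt (by positivity)]
  have hs : 0 < M / r := by positivity
  have := hslope x y (M / r) hs
  have heq : r / 2 * (M / r) + c / (M / r) = M := by
    have hrne : r ≠ 0 := ne_of_gt hr
    have hMne : M ≠ 0 := ne_of_gt hM0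
    field_simp
    nlinarith [hM2]
  rw [heq] at this
  linarith [this, mul_comm M ‖x - y‖]

set_option maxHeartbeats 1000000 in
/-- approximate direction -/
lemma aux_approx (F : E → ℝ) (r c M : ℝ) (hr : 0 < r) (hc : 0 < c)
    (hM : M = Real.sqrt (2 * r * c))
    (hconv : ∀ p q : E, ∀ θ : ℝ, 0 ≤ θ → θ ≤ 1 →
      F (θ • p + (1 - θ) • q) ≤ θ * F p + (1 - θ) * F q)
    (hLip : ∀ x y : E, F x - F y ≤ M * ‖x - y‖)
    (hB : ∀ x : E, ∀ ε : ℝ, 0 < ε → ∃ y, F y + r / 2 * ‖y - x‖ ^ 2 ≤ F x - c + ε)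
    (x : E) (a : ℝ) (ha : 0 < a) :
    ∃ u : E, ‖u‖ = 1 ∧ (∀ t : ℝ, 0 ≤ t → F x + (M - a) * t ≤ F (x + t • u)) ∧
      (∀ t : ℝ, 0 ≤ t → t ≤ M / (2 * r) → F (x - t • u) ≤ F x - (M - a) * t) := by
  have hM0 : 0 < M := by rw [hM]; positivity
  have hM2 : M ^ 2 = 2 * r * c := by rw [hM]; rw [Real.sq_sqrt (by positivity)]
  have hcM : c = M ^ 2 / (2 * r) := by field_simp; linarith [hM2]
  set ε := min (a * M / (2 * r)) (M ^ 2 / (8 * r)) with hε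
  have hε0 : 0 < ε := lt_min (by positivity) (by positivity)
  have hε1 : ε ≤ a * M / (2 * r) := min_le_left _ _
  have hε2 : ε ≤ M ^ 2 / (8 * r) := min_le_right _ _
  clear_value ε
  obtain ⟨y, hy⟩ := hB x ε hε0
  set d := ‖y - x‖ with hdd
  have hd0 : 0 ≤ d := norm_nonneg _
  have hxy : ‖x - y‖ = d := by rw [hdd, norm_sub_rev]
  have hyx : F x - F y ≤ M * d := by rw [← hxy]; exact hLip x y
  have h1 : r / 2 * d ^ 2 - M * d + c ≤ ε := by nlinarith [hy]
  clear_value d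
  have e1 : r / 2 * d ^ 2 - M * d + c = r / 2 * (d - M / r) ^ 2 := by
    rw [hcM]; field_simp; ring
  have hd2 : M / (2 * r) ≤ d := by
    by_contra h
    push_neg at h
    have e2 : M / (2 * r) < M / r - d := by
      have : M / r = M / (2 * r) + M / (2 * r) := by field_simp; ring
      linarith
    have e2' : (0:ℝ) < M / (2 * r) := by positivity
    have e3 : (M / (2 * r)) ^ 2 < (M / r - d) ^ 2 := by nlinarith
    have e4 : r / 2 * (M / (2 * r)) ^ 2 < r / 2 * (M / r - d) ^ 2 := by nlinarith
    have e5 : r / 2 * (M / (2 * r)) ^ 2 = M ^ 2 / (8 * r) := by field_simp; ring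
    have e6 : r / 2 * (d - M / r) ^ 2 = r / 2 * (M / r - d) ^ 2 := by ring
    linarith [h1, hε2]
  have hdpos : 0 < d := lt_of_lt_of_le (by positivity) hd2
  set u := d⁻¹ • (x - y) with hu
  have hun : ‖u‖ = 1 := by
    rw [hu, norm_smul, hxy, Real.norm_eq_abs, abs_of_pos (inv_pos.mpr hdpos)]
    field_simp
  clear_value u
  have hkey : (M - a) * d ≤ F x - F y := by
    have e6 : 0 ≤ r / 2 * (d - M / r) ^ 2 := by positivity
    have e7 : a * (M / (2 * r)) ≤ a * d := mul_le_mul_of_nonneg_left hd2 ha.le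
    have e8 : a * M / (2 * r) = a * (M / (2 * r)) := by ring
    linarith [hy, e1, hε1]
  refine ⟨u, hun, ?_, ?_⟩
  · intro t ht
    have htd : 0 < t + d := by linarith
    have hθ0 : (0:ℝ) ≤ t / (t + d) := by positivity
    have hθ1 : t / (t + d) ≤ 1 := by rw [div_le_one htd]; linarith
    have hid : (t / (t + d)) • y + (1 - t / (t + d)) • (x + t • u) = x := by
      rw [hu]
      have h2 : d ≠ 0 := ne_of_gt hdpos
      have h3 : t + d ≠ 0 := ne_of_gt htd
      match_scalars <;> field_simp <;> ring
    have hcv := hconv y (x + t • u) (t / (t + d)) hθ0 hθ1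
    rw [hid] at hcv
    have hre : t / (t + d) * F y + (1 - t / (t + d)) * F (x + t • u)
        = (t * F y + d * F (x + t • u)) / (t + d) := by field_simp; try ring
    rw [hre, le_div_iff₀ htd] at hcv
    have h6 := mul_le_mul_of_nonneg_left hkey ht
    nlinarith [hcv, h6]
  · intro t ht0 ht1
    have htd : t ≤ d := le_trans ht1 hd2
    have ht' : t / d ≤ 1 := by rw [div_le_one hdpos]; exact htd
    have ht'' : (0:ℝ) ≤ t / d := by positivity
    have hθ0 : (0:ℝ) ≤ 1 - t / d := by linarith
    have hθ1 : 1 - t / d ≤ 1 := by linarith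
    have hcv := hconv x y (1 - t / d) hθ0 hθ1
    have hid : (1 - t / d) • x + (1 - (1 - t / d)) • y = x - t • u := by
      rw [hu]
      have h2 : d ≠ 0 := ne_of_gt hdpos
      match_scalars <;> field_simp <;> ring
    rw [hid] at hcv
    have hre : (1 - t / d) * F x + (1 - (1 - t / d)) * F y
        = (d * F x - t * (F x - F y)) / d := by field_simp; ring
    rw [hre, le_div_iff₀' hdpos] at hcv
    have h6 := mul_le_mul_of_nonneg_left hkey ht0
    nlinarith [hcv, h6]

variable [ProperSpace E]

set_option maxHeartbeats 1000000 in
/-- exact direction via compactness of the sphere -/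
lemma aux_dir (F : E → ℝ) (r c M : ℝ) (hr : 0 < r) (hc : 0 < c)
    (hM : M = Real.sqrt (2 * r * c)) (hFc : Continuous F)
    (hLip : ∀ x y : E, F x - F y ≤ M * ‖x - y‖)
    (happrox : ∀ x : E, ∀ a : ℝ, 0 < a →
      ∃ u : E, ‖u‖ = 1 ∧ (∀ t : ℝ, 0 ≤ t → F x + (M - a) * t ≤ F (x + t • u)) ∧
        (∀ t : ℝ, 0 ≤ t → t ≤ M / (2 * r) → F (x - t • u) ≤ F x - (M - a) * t))
    (x : E) :
    ∃ u : E, ‖u‖ = 1 ∧ (∀ t : ℝ, 0 ≤ t → F (x + t • u) = F x + M * t) ∧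
      (∀ t : ℝ, 0 ≤ t → t ≤ M / (2 * r) → F (x - t • u) = F x - M * t) := by
  set S : ℕ → Set E := fun k =>
    {u : E | ‖u‖ = 1 ∧ (∀ t : ℝ, 0 ≤ t → F x + (M - 1 / (k + 1)) * t ≤ F (x + t • u)) ∧
      (∀ t : ℝ, 0 ≤ t → t ≤ M / (2 * r) → F (x - t • u) ≤ F x - (M - 1 / (k + 1)) * t)}
    with hS
  have hclosed : ∀ k, IsClosed (S k) := by
    intro k
    have h1 : IsClosed {u : E | ‖u‖ = 1} := isClosed_eq (continuous_norm) continuous_const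
    have h2 : IsClosed {u : E | ∀ t : ℝ, 0 ≤ t → F x + (M - 1 / (k + 1)) * t ≤ F (x + t • u)} := by
      rw [Set.setOf_forall]
      refine isClosed_iInter fun t => ?_
      by_cases ht : 0 ≤ t
      · simp only [ht, forall_true_left]
        exact isClosed_le continuous_const (hFc.comp (continuous_const.add (continuous_id.const_smul t)))
      · simp only [ht, false_implies, Set.setOf_true]
        exact isClosed_univ
    have h3 : IsClosed {u : E | ∀ t : ℝ, 0 ≤ t → t ≤ M / (2 * r) →
        F (x - t • u) ≤ F x - (M - 1 / (k + 1)) * t} := by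
      rw [Set.setOf_forall]
      refine isClosed_iInter fun t => ?_
      by_cases ht : 0 ≤ t ∧ t ≤ M / (2 * r)
      · simp only [ht.1, ht.2, forall_true_left]
        exact isClosed_le (hFc.comp (continuous_const.sub (continuous_id.const_smul t))) continuous_const
      · rcases not_and_or.mp ht with h | h
        · simp only [h, false_implies, Set.setOf_true]; exact isClosed_univ
        · have : {u : E | 0 ≤ t → t ≤ M / (2 * r) → F (x - t • u) ≤ F x - (M - 1 / (k + 1)) * t}
              = Set.univ := by
            ext u; simp only [Set.mem_setOf_eq, Set.mem_univ, iff_true]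
            intro _ h2; exact absurd h2 h
          rw [this]; exact isClosed_univ
    exact (h1.inter (h2.inter h3))
  have hmono : ∀ k, S (k + 1) ⊆ S k := by
    intro k u hu
    obtain ⟨h1, h2, h3⟩ := hu
    have hk : (1:ℝ) / (k + 1 + 1) ≤ 1 / (k + 1) := by
      apply div_le_div_of_nonneg_left one_pos.le (by positivity) (by push_cast; linarith)
    refine ⟨h1, fun t ht => ?_, fun t ht0 ht1 => ?_⟩
    · have := h2 t ht
      have : (M - 1 / (↑k + 1)) * t ≤ (M - 1 / (↑k + 1 + 1)) * t := by
        apply mul_le_mul_of_nonneg_right _ ht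
        push_cast
        linarith [hk]
      push_cast at *
      linarith [h2 t ht]
    · have := h3 t ht0 ht1
      have h5 : (M - 1 / (↑k + 1)) * t ≤ (M - 1 / (↑k + 1 + 1)) * t := by
        apply mul_le_mul_of_nonneg_right _ ht0
        push_cast
        linarith [hk]
      push_cast at *
      linarith
  have hne : ∀ k, (S k).Nonempty := by
    intro k
    obtain ⟨u, hu1, hu2, hu3⟩ := happrox x (1 / (k + 1)) (by positivity)
    exact ⟨u, hu1, hu2, hu3⟩
  have hcompact : IsCompact (S 0) :=
    IsCompact.of_isClosed_subset (isCompact_sphere (0:E) 1) (hclosed 0)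
      (fun u hu => by simpa [mem_sphere_zero_iff_norm] using hu.1)
  obtain ⟨u, hu⟩ := IsCompact.nonempty_iInter_of_sequence_nonempty_isCompact_isClosed
    S hmono hne hcompact hclosed
  simp only [Set.mem_iInter] at hu
  have hu1 : ‖u‖ = 1 := (hu 0).1
  refine ⟨u, hu1, ?_, ?_⟩
  · intro t ht
    apply le_antisymm
    · have := hLip (x + t • u) x
      have hn : ‖x + t • u - x‖ = t := by
        rw [show x + t • u - x = t • u by abel, norm_smul, hu1, Real.norm_eq_abs,
          abs_of_nonneg ht, mul_one]
      rw [hn] at this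
      linarith
    · -- F x + M * t ≤ F (x + t • u) from all k
      by_contra h
      push_neg at h
      rcases eq_or_lt_of_le ht with rfl | htpos
      · simp at h
      · set δ := F x + M * t - F (x + t • u) with hδ
        have hδ0 : 0 < δ := by rw [hδ]; linarith
        obtain ⟨k, hk⟩ := exists_nat_one_div_lt (show 0 < δ / t by positivity)
        have h2 := (hu k).2.1 t ht
        have h3 : (1:ℝ) / (k + 1) * t < δ := by
          rw [div_lt_div_iff₀ (by positivity) htpos] at hk
          calc (1:ℝ) / (k + 1) * t < δ / t * t := by
                apply mul_lt_mul_of_pos_right _ htpos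
                rw [div_lt_div_iff₀ (by positivity) htpos]
                push_cast
                linarith [hk]
          _ = δ := by field_simp
        push_cast at h2
        nlinarith [h2, h3]
  · intro t ht0 ht1
    apply le_antisymm
    · by_contra h
      push_neg at h
      rcases eq_or_lt_of_le ht0 with rfl | htpos
      · simp at h
      · set δ := F (x - t • u) - (F x - M * t) with hδ
        have hδ0 : 0 < δ := by rw [hδ]; linarith
        obtain ⟨k, hk⟩ := exists_nat_one_div_lt (show 0 < δ / t by positivity)
        have h2 := (hu k).2.2 t ht0 ht1
        have h3 : (1:ℝ) / (k + 1) * t < δ := by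
          calc (1:ℝ) / (k + 1) * t < δ / t * t := by
                apply mul_lt_mul_of_pos_right _ htpos
                rw [div_lt_div_iff₀ (by positivity) htpos]
                push_cast
                rw [div_lt_div_iff₀ (by positivity) htpos] at hk
                linarith [hk]
          _ = δ := by field_simp
        push_cast at h2
        nlinarith [h2, h3]
    · have := hLip x (x - t • u)
      have hn : ‖x - (x - t • u)‖ = t := by
        rw [show x - (x - t • u) = t • u by abel, norm_smul, hu1, Real.norm_eq_abs,
          abs_of_nonneg ht0, mul_one]
      rw [hn] at this
      linarith

lemma aux_norm_add {u v : E} (hu : ‖u‖ = 1) (hv : ‖v‖ = 1) (h : 2 ≤ ‖u + v‖) : u = v := by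
  have h1 : ‖u + v‖ ^ 2 = 2 + 2 * ⟪u, v⟫ := by
    rw [norm_add_sq_real, hu, hv]; ring
  have h2 : ‖u - v‖ ^ 2 = 2 - 2 * ⟪u, v⟫ := by
    rw [norm_sub_sq_real, hu, hv]; ring
  have h3 : (4:ℝ) ≤ ‖u + v‖ ^ 2 := by nlinarith [norm_nonneg (u + v)]
  have h4 : ‖u - v‖ ^ 2 ≤ 0 := by nlinarith
  have h5 : ‖u - v‖ = 0 := by
    have := sq_nonneg ‖u - v‖
    nlinarith [norm_nonneg (u - v)]
  exact sub_eq_zero.mp (norm_eq_zero.mp h5)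

/-- uniqueness: a backward direction and a forward direction must agree -/
lemma aux_unique (F : E → ℝ) (r M : ℝ) (hr : 0 < r) (hM0 : 0 < M)
    (hconv : ∀ p q : E, ∀ θ : ℝ, 0 ≤ θ → θ ≤ 1 →
      F (θ • p + (1 - θ) • q) ≤ θ * F p + (1 - θ) * F q)
    (hLip : ∀ x y : E, F x - F y ≤ M * ‖x - y‖)
    (x : E) (u₁ u₂ : E) (hu₁ : ‖u₁‖ = 1) (hu₂ : ‖u₂‖ = 1)
    (hb : F (x - (M / (2 * r)) • u₁) = F x - M * (M / (2 * r)))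
    (hf : F (x + (M / (2 * r)) • u₂) = F x + M * (M / (2 * r))) :
    u₁ = u₂ := by
  set t₀ := M / (2 * r) with ht₀
  have ht₀0 : 0 < t₀ := by positivity
  have hid : (1/2 : ℝ) • (x - t₀ • u₁) + (1 - (1/2 : ℝ)) • (x + t₀ • u₂)
      = x + (t₀ / 2) • (u₂ - u₁) := by
    match_scalars <;> ring
  have hcv := hconv (x - t₀ • u₁) (x + t₀ • u₂) (1/2) (by norm_num) (by norm_num)
  rw [hid, hb, hf] at hcv
  have hcv2 : F (x + (t₀ / 2) • (u₂ - u₁)) ≤ F x := by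
    calc F (x + (t₀ / 2) • (u₂ - u₁)) ≤ 1/2 * (F x - M * t₀) + (1 - 1/2) * (F x + M * t₀) := hcv
    _ = F x := by ring
  have hlip := hLip (x + t₀ • u₂) (x + (t₀ / 2) • (u₂ - u₁))
  have hveq : x + t₀ • u₂ - (x + (t₀ / 2) • (u₂ - u₁)) = (t₀ / 2) • (u₁ + u₂) := by
    match_scalars <;> ring
  rw [hveq, hf, norm_smul, Real.norm_eq_abs, abs_of_pos (by positivity : (0:ℝ) < t₀ / 2)] at hlip
  have h6 : M * (t₀ / 2) * 2 ≤ M * (t₀ / 2) * ‖u₁ + u₂‖ := by nlinarith [hcv2, hlip]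
  have h2 : 2 ≤ ‖u₁ + u₂‖ := le_of_mul_le_mul_left h6 (by positivity)
  exact aux_norm_add hu₁ hu₂ h2

/-- perpendicular directions don't change F -/
lemma aux_perp (F : E → ℝ) (M : ℝ) (hM0 : 0 < M) (u₀ : E) (hu₀ : ‖u₀‖ = 1)
    (hLip : ∀ x y : E, F x - F y ≤ M * ‖x - y‖)
    (hall : ∀ z : E, ∀ t : ℝ, F (z + t • u₀) = F z + M * t) :
    ∀ z w : E, ⟪u₀, w⟫ = 0 → F (z + w) ≤ F z := by
  intro z w hw
  by_contra h
  push_neg at h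
  set δ := F (z + w) - F z with hδ
  have hδ0 : 0 < δ := by rw [hδ]; linarith
  clear_value δ
  set t := M * ‖w‖ ^ 2 / (2 * δ) + 1 with hts
  have ht0 : 0 < t := by positivity
  clear_value t
  have hnsq : ‖w + t • u₀‖ ^ 2 = ‖w‖ ^ 2 + t ^ 2 := by
    have hwu : ⟪w, u₀⟫ = 0 := by rw [real_inner_comm]; exact hw
    rw [norm_add_sq_real, real_inner_smul_right, hwu, norm_smul, Real.norm_eq_abs,
      abs_of_pos ht0, hu₀]
    ring
  have hnle : ‖w + t • u₀‖ ≤ t + ‖w‖ ^ 2 / (2 * t) := by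
    have hb : (0:ℝ) ≤ t + ‖w‖ ^ 2 / (2 * t) := by positivity
    have hsq : ‖w + t • u₀‖ ^ 2 ≤ (t + ‖w‖ ^ 2 / (2 * t)) ^ 2 := by
      rw [hnsq]
      have : (t + ‖w‖ ^ 2 / (2 * t)) ^ 2 = t ^ 2 + ‖w‖ ^ 2 + (‖w‖ ^ 2 / (2 * t)) ^ 2 := by
        field_simp; ring
      nlinarith [sq_nonneg (‖w‖ ^ 2 / (2 * t))]
    calc ‖w + t • u₀‖ = Real.sqrt (‖w + t • u₀‖ ^ 2) := (Real.sqrt_sq (norm_nonneg _)).symm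
    _ ≤ Real.sqrt ((t + ‖w‖ ^ 2 / (2 * t)) ^ 2) := Real.sqrt_le_sqrt hsq
    _ = t + ‖w‖ ^ 2 / (2 * t) := Real.sqrt_sq hb
  have hlip := hLip (z + w + t • u₀) z
  have hveq : z + w + t • u₀ - z = w + t • u₀ := by abel
  rw [hveq, hall (z + w) t] at hlip
  have hA : F (z + w) - F z ≤ M * (t + ‖w‖ ^ 2 / (2 * t)) - M * t := by
    linarith [hlip, mul_le_mul_of_nonneg_left hnle hM0.le]
  have hB : M * (t + ‖w‖ ^ 2 / (2 * t)) - M * t = M * ‖w‖ ^ 2 / (2 * t) := by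
    field_simp
    ring
  rw [hB] at hA
  have h2 : M * ‖w‖ ^ 2 < 2 * t * δ := by
    rw [hts]
    have he : 2 * (M * ‖w‖ ^ 2 / (2 * δ) + 1) * δ = M * ‖w‖ ^ 2 + 2 * δ := by field_simp
    rw [he]; linarith
  have h3 : M * ‖w‖ ^ 2 / (2 * t) < δ := by
    rw [div_lt_iff₀ (by positivity : (0:ℝ) < 2 * t)]
    linarith [h2]
  linarith [hA, h3]


/-- directions of full affine lines are unique -/
lemma aux_const (F : E → ℝ) (M : ℝ) (hM0 : 0 < M)
    (hconv : ∀ p q : E, ∀ θ : ℝ, 0 ≤ θ → θ ≤ 1 →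
      F (θ • p + (1 - θ) • q) ≤ θ * F p + (1 - θ) * F q)
    (hLip : ∀ x y : E, F x - F y ≤ M * ‖x - y‖)
    (x y u u' : E) (hu : ‖u‖ = 1) (hu' : ‖u'‖ = 1)
    (hx : ∀ t : ℝ, F (x + t • u) = F x + M * t)
    (hy : ∀ t : ℝ, F (y + t • u') = F y + M * t) : u = u' := by
  have key : ∀ t : ℝ, 0 < t →
      M * t * (2 - ‖u + u'‖) / 2 ≤ (F y - F x) / 2 + M / 2 * ‖x - y‖ := by
    intro t ht
    have hcv := hconv (x + t • u) (y + (-t) • u') (1/2) (by norm_num) (by norm_num)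
    rw [hx t, hy (-t)] at hcv
    have hlip := hLip (x + t • u) ((1/2 : ℝ) • (x + t • u) + (1 - (1/2 : ℝ)) • (y + (-t) • u'))
    have hveq : x + t • u - ((1/2 : ℝ) • (x + t • u) + (1 - (1/2 : ℝ)) • (y + (-t) • u'))
        = (1/2 : ℝ) • ((x - y) + t • (u + u')) := by module
    rw [hveq, hx t] at hlip
    have hnb : ‖(1/2 : ℝ) • ((x - y) + t • (u + u'))‖ ≤ (‖x - y‖ + t * ‖u + u'‖) / 2 := by
      rw [norm_smul, Real.norm_eq_abs]
      have h1 : ‖x - y + t • (u + u')‖ ≤ ‖x - y‖ + t * ‖u + u'‖ := by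
        calc ‖x - y + t • (u + u')‖ ≤ ‖x - y‖ + ‖t • (u + u')‖ := norm_add_le _ _
        _ = ‖x - y‖ + t * ‖u + u'‖ := by
            rw [norm_smul, Real.norm_eq_abs, abs_of_pos ht]
      have h2 : |(1:ℝ)/2| = 1/2 := by norm_num
      rw [h2]
      linarith
    have h3 := mul_le_mul_of_nonneg_left hnb hM0.le
    linarith [hcv, hlip, h3]
  by_contra hne
  have hn2 : ‖u + u'‖ < 2 := by
    rcases lt_or_ge ‖u + u'‖ 2 with h | h
    · exact h
    · exact absurd (aux_norm_add hu hu' h) hne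
  set A := M * (2 - ‖u + u'‖) / 2 with hA
  have hA0 : 0 < A := by
    rw [hA]
    have h7 : (0:ℝ) < 2 - ‖u + u'‖ := by linarith
    positivity
  set B := (F y - F x) / 2 + M / 2 * ‖x - y‖ with hB
  set t := (max B 0 + 1) / A with htdef
  have ht0 : 0 < t := by
    rw [htdef]
    apply div_pos _ hA0
    have h8 : (0:ℝ) ≤ max B 0 := le_max_right _ _
    linarith
  clear_value A B t
  have hAt : t * A = max B 0 + 1 := by
    rw [htdef]
    field_simp
  have h5 : t * A ≤ B := by
    have h6 := key t ht0
    rw [hA]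
    linarith
  have h9 : B ≤ max B 0 := le_max_left _ _
  linarith

set_option maxHeartbeats 1000000 in
/-- the main real-valued statement -/
lemma aux_main (F : E → ℝ) (r c : ℝ) (hr : 0 < r) (hc0 : 0 ≤ c)
    (hconv : ∀ p q : E, ∀ θ : ℝ, 0 ≤ θ → θ ≤ 1 →
      F (θ • p + (1 - θ) • q) ≤ θ * F p + (1 - θ) * F q)
    (hA : ∀ x y : E, F x ≤ F y + r / 2 * ‖x - y‖ ^ 2 + c)
    (hB : ∀ x : E, ∀ ε : ℝ, 0 < ε → ∃ y, F y + r / 2 * ‖y - x‖ ^ 2 ≤ F x - c + ε) :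
    ∃ (a : E) (b : ℝ), ∀ x : E, F x = ⟪a, x⟫ + b := by
  have hslope := aux_slope F r c hr hc0 hconv hA
  rcases eq_or_lt_of_le hc0 with hc | hc
  · -- c = 0 : F is constant
    have hconst : ∀ x y : E, F x ≤ F y := by
      intro x y
      rcases eq_or_ne x y with rfl | hxy
      · exact le_rfl
      have hd : (0:ℝ) < ‖x - y‖ := norm_pos_iff.mpr (sub_ne_zero.mpr hxy)
      by_contra hlt
      push_neg at hlt
      set s := (F x - F y) / (‖x - y‖ * r) with hs
      have hs0 : 0 < s := by rw [hs]; exact div_pos (by linarith) (mul_pos hd hr)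
      have h1 := hslope x y s hs0
      rw [← hc] at h1
      have h2 : ‖x - y‖ * (r / 2 * s + 0 / s) = (F x - F y) / 2 := by
        rw [hs]
        field_simp
        ring
      rw [h2] at h1
      linarith
    refine ⟨0, F 0, fun x => ?_⟩
    have h1 := hconst x 0
    have h2 := hconst 0 x
    rw [inner_zero_left]
    linarith
  · -- c > 0
    set M := Real.sqrt (2 * r * c) with hM
    have hM0 : 0 < M := by rw [hM]; positivity
    have hLip : ∀ x y : E, F x - F y ≤ M * ‖x - y‖ := aux_lip F r c M hr hc hM hslope
    have hFc : Continuous F := by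
      have hlw : LipschitzWith (Real.toNNReal M) F := by
        apply LipschitzWith.of_dist_le_mul
        intro x y
        rw [Real.dist_eq, dist_eq_norm, Real.coe_toNNReal _ hM0.le]
        rw [abs_le]
        constructor
        · have := hLip y x
          rw [norm_sub_rev] at this
          linarith
        · exact hLip x y
      exact hlw.continuous
    have happrox := aux_approx F r c M hr hc hM hconv hLip hB
    have hdir := aux_dir F r c M hr hc hM hFc hLip happrox
    set t₀ := M / (2 * r) with ht₀
    have ht₀0 : 0 < t₀ := by rw [ht₀]; positivity
    set P : E → E → Prop := fun x u => ‖u‖ = 1 ∧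
      (∀ t : ℝ, 0 ≤ t → F (x + t • u) = F x + M * t) ∧
      (∀ t : ℝ, 0 ≤ t → t ≤ t₀ → F (x - t • u) = F x - M * t) with hP
    have hdir' : ∀ x : E, ∃ u, P x u := hdir
    have huniq : ∀ (x u₁ u₂ : E), ‖u₁‖ = 1 → ‖u₂‖ = 1 →
        F (x - t₀ • u₁) = F x - M * t₀ → F (x + t₀ • u₂) = F x + M * t₀ → u₁ = u₂ :=
      fun x u₁ u₂ h1 h2 h3 h4 => aux_unique F r M hr hM0 hconv hLip x u₁ u₂ h1 h2 h3 h4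
    have hshift : ∀ x u, P x u → P (x - t₀ • u) u := by
      rintro x u ⟨hu1, hfwd, hbwd⟩
      have hx₁ : F (x - t₀ • u) = F x - M * t₀ := hbwd t₀ ht₀0.le le_rfl
      have hfwd' : ∀ t : ℝ, 0 ≤ t → F ((x - t₀ • u) + t • u) = F (x - t₀ • u) + M * t := by
        intro t ht
        rcases le_total t t₀ with h | h
        · have hveq : (x - t₀ • u) + t • u = x - (t₀ - t) • u := by module
          rw [hveq, hbwd (t₀ - t) (by linarith) (by linarith), hx₁]; ring
        · have hveq : (x - t₀ • u) + t • u = x + (t - t₀) • u := by module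
          rw [hveq, hfwd (t - t₀) (by linarith), hx₁]; ring
      obtain ⟨u', hu'1, hu'f, hu'b⟩ := hdir' (x - t₀ • u)
      have heq : u' = u := huniq (x - t₀ • u) u' u hu'1 hu1
        (hu'b t₀ ht₀0.le le_rfl) (hfwd' t₀ ht₀0.le)
      rw [heq] at hu'b
      exact ⟨hu1, hfwd', hu'b⟩
    have hiter : ∀ k : ℕ, ∀ x u, P x u →
        P (x - ((k : ℝ) * t₀) • u) u ∧ F (x - ((k : ℝ) * t₀) • u) = F x - M * ((k : ℝ) * t₀) := by
      intro k
      induction k with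
      | zero =>
        intro x u hxu
        constructor
        · have : x - ((0 : ℕ) * t₀ : ℝ) • u = x := by push_cast; module
          rw [this]; exact hxu
        · have : x - ((0 : ℕ) * t₀ : ℝ) • u = x := by push_cast; module
          rw [this]; push_cast; ring
      | succ k ih =>
        intro x u hxu
        obtain ⟨hPk, hFk⟩ := ih x u hxu
        have h1 := hshift _ u hPk
        have hveq : (x - ((k : ℝ) * t₀) • u) - t₀ • u = x - (((k : ℕ) + 1 : ℝ) * t₀) • u := by
          push_cast; module
        constructor
        · have h2 : x - (((k + 1 : ℕ) : ℝ) * t₀) • u = (x - ((k : ℝ) * t₀) • u) - t₀ • u := by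
            push_cast; module
          rw [h2]; exact h1
        · have h2 : x - (((k + 1 : ℕ) : ℝ) * t₀) • u = (x - ((k : ℝ) * t₀) • u) - t₀ • u := by
            push_cast; module
          rw [h2, hPk.2.2 t₀ ht₀0.le le_rfl, hFk]
          push_cast; ring
    have hline : ∀ x u, P x u → ∀ t : ℝ, F (x + t • u) = F x + M * t := by
      intro x u hxu t
      rcases le_or_gt 0 t with ht | ht
      · exact hxu.2.1 t ht
      · obtain ⟨k, hk⟩ := exists_nat_ge (-t / t₀)
        have hk' : 0 ≤ t + (k : ℝ) * t₀ := by
          rw [div_le_iff₀ ht₀0] at hk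
          linarith
        obtain ⟨hPk, hFk⟩ := hiter k x u hxu
        have hveq : x + t • u = (x - ((k : ℝ) * t₀) • u) + (t + (k : ℝ) * t₀) • u := by module
        rw [hveq, hPk.2.1 _ hk', hFk]; ring
    set U : E → E := fun x => Classical.choose (hdir' x) with hU
    have hu : ∀ x, P x (U x) := fun x => Classical.choose_spec (hdir' x)
    have hconstU : ∀ x, U x = U 0 := by
      intro x
      exact aux_const F M hM0 hconv hLip x 0 (U x) (U 0) (hu x).1 (hu 0).1
        (hline x (U x) (hu x)) (hline 0 (U 0) (hu 0))
    set u₀ := U 0 with hu₀def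
    have hu₀1 : ‖u₀‖ = 1 := (hu 0).1
    have hall : ∀ z : E, ∀ t : ℝ, F (z + t • u₀) = F z + M * t := by
      intro z t
      have h1 := hline z (U z) (hu z) t
      rw [hconstU z] at h1
      exact h1
    have hperple := aux_perp F M hM0 u₀ hu₀1 hLip hall
    have hperp : ∀ z w : E, ⟪u₀, w⟫ = 0 → F (z + w) = F z := by
      intro z w hw
      apply le_antisymm (hperple z w hw)
      have h1 := hperple (z + w) (-w) (by rw [inner_neg_right, hw, neg_zero])
      have h2 : z + w + -w = z := by abel
      rw [h2] at h1
      exact h1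
    refine ⟨M • u₀, F 0, fun x => ?_⟩
    set s := ⟪u₀, x⟫ with hsdef
    set w := x - s • u₀ with hwdef
    have hw : ⟪u₀, w⟫ = 0 := by
      rw [hwdef, inner_sub_right, real_inner_smul_right, real_inner_self_eq_norm_sq, hu₀1]
      rw [← hsdef]; ring
    have hx : x = w + s • u₀ := by rw [hwdef]; abel
    have h1 : F x = F w + M * s := by rw [hx]; exact hall w s
    have h2 : F w = F 0 := by
      have := hperp 0 w hw
      rwa [zero_add] at this
    rw [real_inner_smul_left, ← hsdef, h1, h2]
    ring

/-- Convexity for extended-real-valued functions. -/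
def EConvexOn {n : ℕ} (f : EuclideanSpace ℝ (Fin n) → EReal) : Prop :=
  ∀ x y : EuclideanSpace ℝ (Fin n), ∀ θ : ℝ, 0 ≤ θ → θ ≤ 1 →
    f (θ • x + (1 - θ) • y) ≤ ((θ : ℝ) : EReal) * f x + (((1 - θ : ℝ)) : EReal) * f y

set_option maxHeartbeats 1000000 in
/-- For proper lsc convex `f`, `f = e_r f + c` for some constant `c` iff `f` is affine. -/
theorem eq_moreau_envelope_add_const_iff_affine {n : ℕ}
    (f : EuclideanSpace ℝ (Fin n) → EReal) (hlsc : LowerSemicontinuous f)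
    (hproper : ∃ x, f x ≠ ⊤) (hnb : ∀ x, f x ≠ ⊥) (hconv : EConvexOn f)
    (r : ℝ) (hr : 0 < r) :
    (∃ c : ℝ, ∀ x, f x =
        (⨅ y, f y + (((r / 2) * ‖y - x‖ ^ 2 : ℝ) : EReal)) + ((c : ℝ) : EReal)) ↔
      (∃ (a : EuclideanSpace ℝ (Fin n)) (b : ℝ),
        ∀ x, f x = (((inner ℝ a x : ℝ) + b : ℝ) : EReal)) := by
  constructor
  · rintro ⟨c, hc⟩
    obtain ⟨x₀, hx₀⟩ := hproper
    have hnt : ∀ x, f x ≠ ⊤ := by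
      intro x
      have h1 := hc x
      have hfx₀ : f x₀ = (((f x₀).toReal : ℝ) : EReal) := (EReal.coe_toReal hx₀ (hnb x₀)).symm
      have h2 : (⨅ y, f y + (((r / 2) * ‖y - x‖ ^ 2 : ℝ) : EReal))
          ≤ (((f x₀).toReal + (r / 2) * ‖x₀ - x‖ ^ 2 : ℝ) : EReal) := by
        rw [EReal.coe_add]
        refine le_trans (iInf_le _ x₀) ?_
        rw [← hfx₀]
      have h3 : f x ≤ (((f x₀).toReal + (r / 2) * ‖x₀ - x‖ ^ 2 + c : ℝ) : EReal) := by
        rw [h1, EReal.coe_add]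
        exact add_le_add h2 le_rfl
      exact ne_top_of_le_ne_top (EReal.coe_ne_top _) h3
    set F : EuclideanSpace ℝ (Fin n) → ℝ := fun x => (f x).toReal with hFdef
    have hfF : ∀ x, f x = ((F x : ℝ) : EReal) := fun x => (EReal.coe_toReal (hnt x) (hnb x)).symm
    have hInf : ∀ x, (⨅ y, f y + (((r / 2) * ‖y - x‖ ^ 2 : ℝ) : EReal)) = ((F x - c : ℝ) : EReal) := by
      intro x
      have h1 := hc x
      rw [hfF x] at h1
      set I := ⨅ y, f y + (((r / 2) * ‖y - x‖ ^ 2 : ℝ) : EReal) with hI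
      have hIt : I ≠ ⊤ := by
        intro h
        rw [h, EReal.top_add_coe] at h1
        exact EReal.coe_ne_top _ h1
      have hIb : I ≠ ⊥ := by
        intro h
        rw [h, EReal.bot_add] at h1
        exact EReal.coe_ne_bot _ h1
      have hIc : I = ((I.toReal : ℝ) : EReal) := (EReal.coe_toReal hIt hIb).symm
      rw [hIc, ← EReal.coe_add] at h1
      have h2 : F x = I.toReal + c := EReal.coe_eq_coe_iff.mp h1
      rw [hIc]
      congr 1
      linarith
    have hA : ∀ x y : EuclideanSpace ℝ (Fin n), F x ≤ F y + r / 2 * ‖x - y‖ ^ 2 + c := by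
      intro x y
      have h1 : (((F x - c : ℝ)) : EReal) ≤ f y + (((r / 2) * ‖y - x‖ ^ 2 : ℝ) : EReal) := by
        rw [← hInf x]
        exact iInf_le _ y
      rw [hfF y, ← EReal.coe_add, EReal.coe_le_coe_iff] at h1
      rw [norm_sub_rev] at h1
      linarith
    have hB : ∀ x : EuclideanSpace ℝ (Fin n), ∀ ε : ℝ, 0 < ε →
        ∃ y, F y + r / 2 * ‖y - x‖ ^ 2 ≤ F x - c + ε := by
      intro x ε hε
      have h1 : (⨅ y, f y + (((r / 2) * ‖y - x‖ ^ 2 : ℝ) : EReal)) < ((F x - c + ε : ℝ) : EReal) := by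
        rw [hInf x]
        exact EReal.coe_lt_coe_iff.mpr (by linarith)
      obtain ⟨y, hy⟩ := iInf_lt_iff.mp h1
      refine ⟨y, ?_⟩
      rw [hfF y, ← EReal.coe_add] at hy
      exact (EReal.coe_le_coe_iff.mp hy.le)
    have hc0 : 0 ≤ c := by
      obtain ⟨y, hy⟩ := hB x₀ 1 one_pos
      have h1 := hA x₀ y
      have h2 : r / 2 * ‖x₀ - y‖ ^ 2 = r / 2 * ‖y - x₀‖ ^ 2 := by rw [norm_sub_rev]
      -- also directly : iInf ≤ f x₀ gives F x₀ - c ≤ F x₀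
      have h3 : (((F x₀ - c : ℝ)) : EReal) ≤ f x₀ + (((r / 2) * ‖x₀ - x₀‖ ^ 2 : ℝ) : EReal) := by
        rw [← hInf x₀]
        exact iInf_le _ x₀
      rw [hfF x₀, ← EReal.coe_add, EReal.coe_le_coe_iff] at h3
      simp only [sub_self, norm_zero] at h3
      nlinarith [h3]
    have hconvF : ∀ p q : EuclideanSpace ℝ (Fin n), ∀ θ : ℝ, 0 ≤ θ → θ ≤ 1 →
        F (θ • p + (1 - θ) • q) ≤ θ * F p + (1 - θ) * F q := by
      intro p q θ h0 h1
      have h2 := hconv p q θ h0 h1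
      rw [hfF (θ • p + (1 - θ) • q), hfF p, hfF q, ← EReal.coe_mul, ← EReal.coe_mul,
        ← EReal.coe_add, EReal.coe_le_coe_iff] at h2
      exact h2
    obtain ⟨a, b, hab⟩ := aux_main F r c hr hc0 hconvF hA hB
    exact ⟨a, b, fun x => by rw [hfF x, hab x]⟩
  · rintro ⟨a, b, hab⟩
    refine ⟨‖a‖ ^ 2 / (2 * r), fun x => ?_⟩
    have hInf : (⨅ y, f y + (((r / 2) * ‖y - x‖ ^ 2 : ℝ) : EReal))
        = ((⟪a, x⟫ + b - ‖a‖ ^ 2 / (2 * r) : ℝ) : EReal) := by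
      apply le_antisymm
      · have hval : f (x - r⁻¹ • a) + (((r / 2) * ‖(x - r⁻¹ • a) - x‖ ^ 2 : ℝ) : EReal)
            = ((⟪a, x⟫ + b - ‖a‖ ^ 2 / (2 * r) : ℝ) : EReal) := by
          rw [hab (x - r⁻¹ • a), ← EReal.coe_add, EReal.coe_eq_coe_iff]
          have hn : ‖(x - r⁻¹ • a) - x‖ = r⁻¹ * ‖a‖ := by
            rw [show (x - r⁻¹ • a) - x = -(r⁻¹ • a) by abel, norm_neg, norm_smul,
              Real.norm_eq_abs, abs_of_pos (inv_pos.mpr hr)]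
          rw [hn, inner_sub_right, real_inner_smul_right, real_inner_self_eq_norm_sq]
          field_simp
          ring
        rw [← hval]
        exact iInf_le _ (x - r⁻¹ • a)
      · apply le_iInf
        intro y
        rw [hab y, ← EReal.coe_add, EReal.coe_le_coe_iff]
        have hsq : (0:ℝ) ≤ r / 2 * ‖(y - x) + r⁻¹ • a‖ ^ 2 := by positivity
        have e1 : ‖(y - x) + r⁻¹ • a‖ ^ 2
            = ‖y - x‖ ^ 2 + 2 * (r⁻¹ * ⟪y - x, a⟫) + (r⁻¹ * ‖a‖) ^ 2 := by
          rw [norm_add_sq_real, real_inner_smul_right, norm_smul, Real.norm_eq_abs,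
            abs_of_pos (inv_pos.mpr hr)]
        have e2 : ⟪y - x, a⟫ = ⟪a, y⟫ - ⟪a, x⟫ := by
          rw [real_inner_comm, inner_sub_right]
        have e4 : r / 2 * ‖(y - x) + r⁻¹ • a‖ ^ 2
            = r / 2 * ‖y - x‖ ^ 2 + ⟪y - x, a⟫ + ‖a‖ ^ 2 / (2 * r) := by
          rw [e1]
          field_simp
        rw [e4, e2] at hsq
        linarith
    rw [hab x, hInf, ← EReal.coe_add, EReal.coe_eq_coe_iff]
    ring
end

section
/- Let f ∈ Γ₀(ℝⁿ). Then f is essentially strictly convex if and only if the Moreau envelope e_r f is strictly convex (for r > 0). -/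
open Set RealInnerProductSpace

/-- Strict convexity on a set for extended-real-valued functions. -/
def EStrictConvexOn {n : ℕ} (s : Set (EuclideanSpace ℝ (Fin n)))
    (f : EuclideanSpace ℝ (Fin n) → EReal) : Prop :=
  ∀ x ∈ s, ∀ y ∈ s, x ≠ y → ∀ θ : ℝ, 0 < θ → θ < 1 →
    f (θ • x + (1 - θ) • y) < ((θ : ℝ) : EReal) * f x + (((1 - θ : ℝ)) : EReal) * f y

/-- The convex subdifferential of an extended-real-valued function. -/
def ESubdiff {n : ℕ} (f : EuclideanSpace ℝ (Fin n) → EReal)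
    (x v : EuclideanSpace ℝ (Fin n)) : Prop :=
  ∀ y, f x + (((inner ℝ v (y - x) : ℝ)) : EReal) ≤ f y



lemma lsc_exists_min {α : Type*} [TopologicalSpace α] {K : Set α} (hK : IsCompact K)
    (hne : K.Nonempty) {g : α → EReal} (hg : LowerSemicontinuous g) :
    ∃ p ∈ K, ∀ y ∈ K, g p ≤ g y := by
  by_contra hcon
  push_neg at hcon
  have hsel : ∀ i : K, ∃ y, y ∈ K ∧ g y < g i := by
    intro i
    obtain ⟨y, hy, hlt⟩ := hcon i i.2
    exact ⟨y, hy, hlt⟩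
  choose Y hYK hYlt using hsel
  have hsel2 : ∀ i : K, ∃ t : ℝ, g (Y i) < (t : EReal) ∧ (t : EReal) < g i :=
    fun i => EReal.exists_between_coe_real (hYlt i)
  choose t ht1 ht2 using hsel2
  obtain ⟨s, hs⟩ := hK.elim_finite_subcover (fun i : K => {z | (t i : EReal) < g z})
    (fun i => hg.isOpen_preimage _) (fun p hp => Set.mem_iUnion.2 ⟨⟨p, hp⟩, ht2 _⟩)
  have hsne : s.Nonempty := by
    obtain ⟨x, hx⟩ := hne
    obtain ⟨i, hi, _⟩ := Set.mem_iUnion₂.1 (hs hx)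
    exact ⟨i, hi⟩
  obtain ⟨i0, hi0s, hi0min⟩ := s.exists_min_image t hsne
  obtain ⟨i1, hi1s, hlt⟩ := Set.mem_iUnion₂.1 (hs (hYK i0))
  have h1 : (t i1 : EReal) < (t i0 : EReal) := lt_trans hlt (ht1 i0)
  exact absurd (hi0min i1 hi1s) (not_le.2 (EReal.coe_lt_coe_iff.1 h1))

open RealInnerProductSpace in
lemma normsq_strict_convex {E : Type*} [NormedAddCommGroup E] [InnerProductSpace ℝ E]
    {u w : E} (h : u ≠ w) {θ : ℝ} (h0 : 0 < θ) (h1 : θ < 1) :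
    ‖θ • u + (1 - θ) • w‖ ^ 2 < θ * ‖u‖ ^ 2 + (1 - θ) * ‖w‖ ^ 2 := by
  have hexp : ‖θ • u + (1 - θ) • w‖ ^ 2
      = θ^2 * ‖u‖^2 + 2 * (θ * (1-θ) * ⟪u, w⟫) + (1-θ)^2 * ‖w‖^2 := by
    rw [norm_add_sq_real, norm_smul, norm_smul, real_inner_smul_left, real_inner_smul_right]
    rw [Real.norm_eq_abs, Real.norm_eq_abs, abs_of_pos h0, abs_of_pos (by linarith : (0:ℝ) < 1 - θ)]
    ring
  have hsub : ‖u - w‖^2 = ‖u‖^2 - 2 * ⟪u, w⟫ + ‖w‖^2 := by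
    rw [norm_sub_sq_real]
  have hpos : 0 < ‖u - w‖^2 :=
    pow_pos (norm_pos_iff.2 (sub_ne_zero.2 h)) 2
  nlinarith [mul_pos (mul_pos h0 (by linarith : (0:ℝ) < 1 - θ)) hpos, hexp, hsub]



lemma exists_affine_minorant {n : ℕ} (f : EuclideanSpace ℝ (Fin n) → EReal)
    (hlsc : LowerSemicontinuous f) (hproper : ∃ x, f x ≠ ⊤) (hnb : ∀ x, f x ≠ ⊥)
    (hconv : ∀ x y : EuclideanSpace ℝ (Fin n), ∀ θ : ℝ, 0 ≤ θ → θ ≤ 1 →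
      f (θ • x + (1 - θ) • y) ≤ ((θ : ℝ) : EReal) * f x + (((1 - θ : ℝ)) : EReal) * f y) :
    ∃ (w : EuclideanSpace ℝ (Fin n)) (c : ℝ),
      ∀ y, (((inner ℝ w y : ℝ) + c : ℝ) : EReal) ≤ f y := by
  classical
  obtain ⟨x0, hx0⟩ := hproper
  set a0 : ℝ := (f x0).toReal with ha0
  have hfx0 : f x0 = (a0 : EReal) := (EReal.coe_toReal hx0 (hnb x0)).symm
  set S : Set (EuclideanSpace ℝ (Fin n) × ℝ) := {p | f p.1 ≤ (p.2 : EReal)} with hS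
  have hSclosed : IsClosed S := by
    have hepi : IsClosed {p : EuclideanSpace ℝ (Fin n) × EReal | f p.1 ≤ p.2} :=
      hlsc.isClosed_epigraph
    have : S = (fun p : EuclideanSpace ℝ (Fin n) × ℝ => (p.1, (p.2 : EReal))) ⁻¹'
        {p : EuclideanSpace ℝ (Fin n) × EReal | f p.1 ≤ p.2} := rfl
    rw [this]
    exact hepi.preimage (continuous_fst.prodMk (continuous_coe_real_ereal.comp continuous_snd))
  have hSconv : Convex ℝ S := by
    rintro p hp q hq α β hα hβ hαβ
    have hβ' : β = 1 - α := by linarith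
    subst hβ'
    have h1 := hconv p.1 q.1 α hα (by linarith)
    have h2 : ((α : ℝ) : EReal) * f p.1 ≤ ((α : ℝ) : EReal) * ((p.2 : ℝ) : EReal) :=
      mul_le_mul_of_nonneg_left hp (by exact_mod_cast hα)
    have h3 : (((1 - α : ℝ)) : EReal) * f q.1 ≤ (((1 - α : ℝ)) : EReal) * ((q.2 : ℝ) : EReal) :=
      mul_le_mul_of_nonneg_left hq (by exact_mod_cast hβ)
    have : f (α • p.1 + (1-α) • q.1) ≤ ((α * p.2 + (1-α) * q.2 : ℝ) : EReal) := by
      rw [EReal.coe_add, EReal.coe_mul, EReal.coe_mul]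
      exact le_trans h1 (add_le_add h2 h3)
    exact this
  have hz0 : (x0, a0 - 1) ∉ S := by
    intro hmem
    have : (a0 : EReal) ≤ ((a0 - 1 : ℝ) : EReal) := hfx0 ▸ hmem
    have := EReal.coe_le_coe_iff.1 this
    linarith
  obtain ⟨φ, u, hφS, hφpt⟩ := geometric_hahn_banach_closed_point hSconv hSclosed hz0
  set ψ : EuclideanSpace ℝ (Fin n) →L[ℝ] ℝ :=
    φ.comp (ContinuousLinearMap.inl ℝ (EuclideanSpace ℝ (Fin n)) ℝ) with hψ
  set s0 : ℝ := φ (0, 1) with hs0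
  have hsplit : ∀ (x : EuclideanSpace ℝ (Fin n)) (t : ℝ), φ (x, t) = ψ x + t * s0 := by
    intro x t
    have : (x, t) = (x, (0:ℝ)) + t • ((0 : EuclideanSpace ℝ (Fin n)), (1:ℝ)) := by
      simp [Prod.ext_iff]
    rw [this, map_add, map_smul]
    simp [hψ, ContinuousLinearMap.inl, smul_eq_mul, mul_comm, hs0]
  -- membership of vertical ray
  have hray : ∀ m : ℝ, a0 ≤ m → ψ x0 + m * s0 < u := by
    intro m hm
    have hmem : (x0, m) ∈ S := by
      show f x0 ≤ (m : EReal)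
      rw [hfx0]; exact_mod_cast hm
    have := hφS _ hmem
    rwa [hsplit] at this
  have hpt' : u < ψ x0 + (a0 - 1) * s0 := by
    have := hφpt
    rwa [hsplit] at this
  have hs0neg : s0 < 0 := by
    rcases lt_trichotomy s0 0 with h | h | h
    · exact h
    · exfalso
      have h1 := hray a0 le_rfl
      rw [h] at h1 hpt'
      simp at h1 hpt'
      linarith
    · exfalso
      have h1 := hray (max a0 ((u - ψ x0) / s0 + 1)) (le_max_left _ _)
      have h2 : (u - ψ x0) / s0 + 1 ≤ max a0 ((u - ψ x0) / s0 + 1) := le_max_right _ _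
      have h3 : ((u - ψ x0) / s0 + 1) * s0 ≤ (max a0 ((u - ψ x0) / s0 + 1)) * s0 :=
        mul_le_mul_of_nonneg_right h2 h.le
      have h4 : ((u - ψ x0) / s0 + 1) * s0 = u - ψ x0 + s0 := by
        field_simp
      nlinarith
  refine ⟨(-s0⁻¹) • (InnerProductSpace.toDual ℝ _).symm ψ, u / s0, ?_⟩
  intro y
  by_cases hy : f y = ⊤
  · rw [hy]; exact le_top
  have hfy : f y = ((f y).toReal : EReal) := (EReal.coe_toReal hy (hnb y)).symm
  set b : ℝ := (f y).toReal
  have hmem : (y, b) ∈ S := by show f y ≤ (b : EReal); rw [hfy]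
  have hlt : ψ y + b * s0 < u := by have := hφS _ hmem; rwa [hsplit] at this
  have hwy : (inner ℝ ((-s0⁻¹) • (InnerProductSpace.toDual ℝ _).symm ψ) y : ℝ)
      = -s0⁻¹ * ψ y := by
    rw [real_inner_smul_left, InnerProductSpace.toDual_symm_apply]
  rw [hfy, hwy, EReal.coe_le_coe_iff]
  have hs0ne : s0 ≠ 0 := ne_of_lt hs0neg
  rw [div_eq_mul_inv]
  have hcalc : (ψ y + b * s0) * s0⁻¹ = ψ y * s0⁻¹ + b := by field_simp
  have h2 := mul_lt_mul_of_neg_right hlt (inv_lt_zero.2 hs0neg)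
  rw [hcalc] at h2
  linarith




lemma exists_prox {n : ℕ} (f : EuclideanSpace ℝ (Fin n) → EReal)
    (hlsc : LowerSemicontinuous f) (hnb : ∀ x, f x ≠ ⊥)
    (w : EuclideanSpace ℝ (Fin n)) (c : ℝ)
    (hmin : ∀ y, (((inner ℝ w y : ℝ) + c : ℝ) : EReal) ≤ f y)
    (x0 : EuclideanSpace ℝ (Fin n)) (hx0 : f x0 ≠ ⊤) (r : ℝ) (hr : 0 < r)
    (x : EuclideanSpace ℝ (Fin n)) :
    ∃ p, (∀ y, f p + ((r / 2 * ‖p - x‖ ^ 2 : ℝ) : EReal)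
        ≤ f y + ((r / 2 * ‖y - x‖ ^ 2 : ℝ) : EReal)) ∧ f p ≠ ⊤ := by
  classical
  set g : EuclideanSpace ℝ (Fin n) → EReal :=
    fun y => f y + ((r / 2 * ‖y - x‖ ^ 2 : ℝ) : EReal) with hgdef
  have hglsc : LowerSemicontinuous g := by
    apply hlsc.add' (g := fun y => ((r / 2 * ‖y - x‖ ^ 2 : ℝ) : EReal))
    · apply Continuous.lowerSemicontinuous
      apply continuous_coe_real_ereal.comp
      continuity
    · intro z
      exact EReal.continuousAt_add (Or.inr (EReal.coe_ne_bot _)) (Or.inr (EReal.coe_ne_top _))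
  set M : ℝ := (f x0).toReal + r / 2 * ‖x0 - x‖ ^ 2 with hM
  have hfx0 : f x0 = ((f x0).toReal : EReal) := (EReal.coe_toReal hx0 (hnb x0)).symm
  have hgx0 : g x0 ≤ (M : EReal) := by
    rw [hgdef]
    simp only
    rw [hfx0, ← EReal.coe_add, hM]
  -- quadratic lower bound
  set mx : ℝ := (inner ℝ w x : ℝ) + c - ‖w‖ ^ 2 / (2 * r) with hmx
  have hquad : ∀ y : EuclideanSpace ℝ (Fin n),
      r / 2 * ‖y - x + r⁻¹ • w‖ ^ 2 = (inner ℝ w y : ℝ) + c + r / 2 * ‖y - x‖ ^ 2 - mx := by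
    intro y
    have hexp : ‖y - x + r⁻¹ • w‖ ^ 2
        = ‖y - x‖ ^ 2 + 2 * (r⁻¹ * (inner ℝ (y - x) w : ℝ)) + r⁻¹ ^ 2 * ‖w‖ ^ 2 := by
      rw [norm_add_sq_real, real_inner_smul_right, norm_smul, Real.norm_eq_abs,
        abs_of_pos (inv_pos.2 hr)]
      ring
    have hinner : (inner ℝ (y - x) w : ℝ) = (inner ℝ w y : ℝ) - (inner ℝ w x : ℝ) := by
      rw [real_inner_comm, inner_sub_right]
    rw [hexp, hinner, hmx]
    field_simp
    ring
  have hlb : ∀ y, (((inner ℝ w y : ℝ) + c + r / 2 * ‖y - x‖ ^ 2 : ℝ) : EReal) ≤ g y := by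
    intro y
    rw [hgdef]
    simp only
    rw [EReal.coe_add]
    exact add_le_add (hmin y) le_rfl
  set K : Set (EuclideanSpace ℝ (Fin n)) := {y | g y ≤ (M : EReal)} with hK
  have hx0K : x0 ∈ K := hgx0
  have hKclosed : IsClosed K := hglsc.isClosed_preimage _
  have hKsub : K ⊆ Metric.closedBall (x - r⁻¹ • w) (Real.sqrt (2 * (M - mx) / r)) := by
    intro y hy
    have h1 : (((inner ℝ w y : ℝ) + c + r / 2 * ‖y - x‖ ^ 2 : ℝ) : EReal) ≤ (M : EReal) :=
      le_trans (hlb y) hy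
    have h2 : (inner ℝ w y : ℝ) + c + r / 2 * ‖y - x‖ ^ 2 ≤ M := EReal.coe_le_coe_iff.1 h1
    have h3 : r / 2 * ‖y - x + r⁻¹ • w‖ ^ 2 ≤ M - mx := by rw [hquad y]; linarith
    have h4 : ‖y - x + r⁻¹ • w‖ ^ 2 ≤ 2 * (M - mx) / r := by
      rw [le_div_iff₀ hr] at *
      nlinarith
    have h5 : ‖y - (x - r⁻¹ • w)‖ = ‖y - x + r⁻¹ • w‖ := by
      congr 1
      abel
    rw [Metric.mem_closedBall, dist_eq_norm, h5]
    exact Real.le_sqrt_of_sq_le h4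
  have hKcpt : IsCompact K :=
    (isCompact_closedBall _ _).of_isClosed_subset hKclosed hKsub
  obtain ⟨p, hpK, hpmin⟩ := lsc_exists_min hKcpt ⟨x0, hx0K⟩ hglsc
  have hgp : g p ≤ (M : EReal) := le_trans (hpmin x0 hx0K) hgx0
  have hfp : f p ≠ ⊤ := by
    intro htop
    rw [hgdef] at hgp
    simp only [htop] at hgp
    rw [EReal.top_add_coe] at hgp
    exact absurd hgp (by simp)
  refine ⟨p, ?_, hfp⟩
  intro y
  by_cases hyK : y ∈ K
  · exact hpmin y hyK
  · have : (M : EReal) < g y := not_le.1 hyK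
    exact le_trans hgp this.le




lemma subdiff_finite {n : ℕ} (f : EuclideanSpace ℝ (Fin n) → EReal)
    (hproper : ∃ x, f x ≠ ⊤) (x v : EuclideanSpace ℝ (Fin n)) (hv : ESubdiff f x v) :
    f x ≠ ⊤ := by
  intro htop
  obtain ⟨z, hz⟩ := hproper
  have := hv z
  rw [htop, EReal.top_add_coe] at this
  exact hz (top_le_iff.1 this)

lemma prox_subdiff {n : ℕ} (f : EuclideanSpace ℝ (Fin n) → EReal)
    (hnb : ∀ x, f x ≠ ⊥)
    (hconv : ∀ x y : EuclideanSpace ℝ (Fin n), ∀ θ : ℝ, 0 ≤ θ → θ ≤ 1 →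
      f (θ • x + (1 - θ) • y) ≤ ((θ : ℝ) : EReal) * f x + (((1 - θ : ℝ)) : EReal) * f y)
    (r : ℝ) (hr : 0 < r) (x p : EuclideanSpace ℝ (Fin n))
    (hp : ∀ y, f p + ((r / 2 * ‖p - x‖ ^ 2 : ℝ) : EReal)
        ≤ f y + ((r / 2 * ‖y - x‖ ^ 2 : ℝ) : EReal))
    (hfp : f p ≠ ⊤) :
    ESubdiff f p (r • (x - p)) := by
  intro y
  by_cases hy : f y = ⊤
  · rw [hy]; exact le_top
  have hfa : f p = ((f p).toReal : EReal) := (EReal.coe_toReal hfp (hnb p)).symm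
  have hfb : f y = ((f y).toReal : EReal) := (EReal.coe_toReal hy (hnb y)).symm
  set a : ℝ := (f p).toReal
  set b : ℝ := (f y).toReal
  rw [hfa, hfb, ← EReal.coe_add, EReal.coe_le_coe_iff]
  have hinner : (inner ℝ (r • (x - p)) (y - p) : ℝ) = r * (inner ℝ (x - p) (y - p) : ℝ) :=
    real_inner_smul_left _ _ _
  rw [hinner]
  -- key inequality for each t ∈ (0,1]
  have key : ∀ t : ℝ, 0 < t → t ≤ 1 →
      0 ≤ t * (b - a) + r * t * (inner ℝ (p - x) (y - p) : ℝ) + r * t ^ 2 / 2 * ‖y - p‖ ^ 2 := by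
    intro t ht0 ht1
    have hcv := hconv y p t ht0.le ht1
    rw [hfa, hfb] at hcv
    have hcv' : f (t • y + (1 - t) • p) ≤ ((t * b + (1 - t) * a : ℝ) : EReal) := by
      rw [EReal.coe_add, EReal.coe_mul, EReal.coe_mul]
      exact hcv
    have hmin := hp (t • y + (1 - t) • p)
    have hchain : ((a + r / 2 * ‖p - x‖ ^ 2 : ℝ) : EReal)
        ≤ ((t * b + (1 - t) * a + r / 2 * ‖t • y + (1 - t) • p - x‖ ^ 2 : ℝ) : EReal) := by
      rw [EReal.coe_add, EReal.coe_add]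
      refine le_trans ?_ (add_le_add hcv' le_rfl)
      rw [← EReal.coe_add]
      rw [hfa] at hmin
      rw [← EReal.coe_add] at hmin
      exact hmin
    have hre := EReal.coe_le_coe_iff.1 hchain
    have hyt : t • y + (1 - t) • p - x = (p - x) + t • (y - p) := by
      rw [sub_smul, one_smul, smul_sub]
      abel
    have hnorm : ‖t • y + (1 - t) • p - x‖ ^ 2
        = ‖p - x‖ ^ 2 + 2 * (t * (inner ℝ (p - x) (y - p) : ℝ)) + t ^ 2 * ‖y - p‖ ^ 2 := by
      rw [hyt, norm_add_sq_real, real_inner_smul_right, norm_smul, Real.norm_eq_abs,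
        abs_of_pos ht0]
      ring
    rw [hnorm] at hre
    nlinarith
  -- pass to the limit t → 0
  by_contra hcon
  push_neg at hcon
  set ε : ℝ := a + r * (inner ℝ (x - p) (y - p) : ℝ) - b with hε
  have hεpos : 0 < ε := by rw [hε]; linarith
  set t : ℝ := min 1 (ε / (r * ‖y - p‖ ^ 2 + 1)) with ht
  have hden : 0 < r * ‖y - p‖ ^ 2 + 1 := by positivity
  have ht0 : 0 < t := lt_min one_pos (div_pos hεpos hden)
  have ht1 : t ≤ 1 := min_le_left _ _
  have hkey := key t ht0 ht1
  have hts : t ≤ ε / (r * ‖y - p‖ ^ 2 + 1) := min_le_right _ _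
  have hip : (inner ℝ (p - x) (y - p) : ℝ) = -(inner ℝ (x - p) (y - p) : ℝ) := by
    rw [← inner_neg_left, neg_sub]
  rw [hip] at hkey
  -- from hkey : 0 ≤ t*(b-a) - r*t*⟪x-p,y-p⟫ + r*t²/2*‖y-p‖², i.e. 0 ≤ t*(-ε) + r t²/2 ‖y-p‖²
  have h2 : 0 ≤ t * (-ε) + r * t ^ 2 / 2 * ‖y - p‖ ^ 2 := by
    rw [hε]; nlinarith
  have h3 : r * t / 2 * ‖y - p‖ ^ 2 < ε := by
    have h4 : t * (r * ‖y - p‖ ^ 2 + 1) ≤ ε := by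
      rw [div_eq_mul_inv] at hts
      calc t * (r * ‖y - p‖ ^ 2 + 1) ≤ ε * (r * ‖y - p‖ ^ 2 + 1)⁻¹ * (r * ‖y - p‖ ^ 2 + 1) :=
            mul_le_mul_of_nonneg_right hts hden.le
        _ = ε := by field_simp
    nlinarith
  nlinarith




lemma subdiff_segment {n : ℕ} (f : EuclideanSpace ℝ (Fin n) → EReal)
    (hnb : ∀ x, f x ≠ ⊥)
    (hconv : ∀ x y : EuclideanSpace ℝ (Fin n), ∀ θ : ℝ, 0 ≤ θ → θ ≤ 1 →
      f (θ • x + (1 - θ) • y) ≤ ((θ : ℝ) : EReal) * f x + (((1 - θ : ℝ)) : EReal) * f y)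
    (p q v : EuclideanSpace ℝ (Fin n)) (hp : ESubdiff f p v) (hq : ESubdiff f q v)
    (t : ℝ) (h0 : 0 ≤ t) (h1 : t ≤ 1) :
    ESubdiff f (t • p + (1 - t) • q) v := by
  intro z
  by_cases hz : f z = ⊤
  · rw [hz]; exact le_top
  have hfz : f z = ((f z).toReal : EReal) := (EReal.coe_toReal hz (hnb z)).symm
  set bz : ℝ := (f z).toReal
  have hfptop : f p ≠ ⊤ := by
    intro htop
    have := hp z
    rw [htop, EReal.top_add_coe, top_le_iff] at this
    exact hz this
  have hfqtop : f q ≠ ⊤ := by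
    intro htop
    have := hq z
    rw [htop, EReal.top_add_coe, top_le_iff] at this
    exact hz this
  have hfa : f p = ((f p).toReal : EReal) := (EReal.coe_toReal hfptop (hnb p)).symm
  have hfb : f q = ((f q).toReal : EReal) := (EReal.coe_toReal hfqtop (hnb q)).symm
  set a : ℝ := (f p).toReal
  set b : ℝ := (f q).toReal
  have h1p : a + (inner ℝ v (z - p) : ℝ) ≤ bz := by
    have := hp z; rw [hfa, hfz, ← EReal.coe_add, EReal.coe_le_coe_iff] at this; exact this
  have h1q : b + (inner ℝ v (z - q) : ℝ) ≤ bz := by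
    have := hq z; rw [hfb, hfz, ← EReal.coe_add, EReal.coe_le_coe_iff] at this; exact this
  have hcv : f (t • p + (1 - t) • q) ≤ ((t * a + (1 - t) * b : ℝ) : EReal) := by
    have := hconv p q t h0 h1
    rw [hfa, hfb] at this
    rw [EReal.coe_add, EReal.coe_mul, EReal.coe_mul]
    exact this
  have hzdecomp : z - (t • p + (1 - t) • q) = t • (z - p) + (1 - t) • (z - q) := by
    rw [smul_sub, smul_sub, sub_smul, sub_smul, one_smul, one_smul]
    abel
  have hinner : (inner ℝ v (z - (t • p + (1 - t) • q)) : ℝ)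
      = t * (inner ℝ v (z - p) : ℝ) + (1 - t) * (inner ℝ v (z - q) : ℝ) := by
    rw [hzdecomp, inner_add_right, real_inner_smul_right, real_inner_smul_right]
  calc f (t • p + (1 - t) • q) + ((inner ℝ v (z - (t • p + (1 - t) • q)) : ℝ) : EReal)
      ≤ ((t * a + (1 - t) * b : ℝ) : EReal)
        + ((inner ℝ v (z - (t • p + (1 - t) • q)) : ℝ) : EReal) := by
        exact add_le_add hcv le_rfl
    _ = ((t * a + (1 - t) * b + (inner ℝ v (z - (t • p + (1 - t) • q)) : ℝ) : ℝ) : EReal) := by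
        norm_cast
    _ ≤ ((bz : ℝ) : EReal) := by
        rw [EReal.coe_le_coe_iff, hinner]
        nlinarith
    _ = f z := hfz.symm

lemma env_of_subdiff {n : ℕ} (f : EuclideanSpace ℝ (Fin n) → EReal)
    (hnb : ∀ x, f x ≠ ⊥) (r : ℝ) (hr : 0 < r) (c v : EuclideanSpace ℝ (Fin n))
    (hv : ESubdiff f c v) (hfc : f c ≠ ⊤) :
    (⨅ y, f y + ((r / 2 * ‖y - (c + r⁻¹ • v)‖ ^ 2 : ℝ) : EReal))
      = f c + ((‖v‖ ^ 2 / (2 * r) : ℝ) : EReal) := by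
  have hfa : f c = ((f c).toReal : EReal) := (EReal.coe_toReal hfc (hnb c)).symm
  set a : ℝ := (f c).toReal
  apply le_antisymm
  · apply iInf_le_of_le c
    have hnormc : ‖c - (c + r⁻¹ • v)‖ ^ 2 = ‖v‖ ^ 2 / r ^ 2 := by
      have : c - (c + r⁻¹ • v) = -(r⁻¹ • v) := by abel
      rw [this, norm_neg, norm_smul, Real.norm_eq_abs, abs_of_pos (inv_pos.2 hr)]
      field_simp
    rw [hnormc]
    apply le_of_eq
    congr 1
    rw [EReal.coe_eq_coe_iff]
    field_simp
  · apply le_iInf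
    intro y
    by_cases hy : f y = ⊤
    · rw [hy, EReal.top_add_coe]; exact le_top
    have hfb : f y = ((f y).toReal : EReal) := (EReal.coe_toReal hy (hnb y)).symm
    set b : ℝ := (f y).toReal
    have hsub : a + (inner ℝ v (y - c) : ℝ) ≤ b := by
      have := hv y; rw [hfa, hfb, ← EReal.coe_add, EReal.coe_le_coe_iff] at this; exact this
    rw [hfa, hfb, ← EReal.coe_add, ← EReal.coe_add, EReal.coe_le_coe_iff]
    have hexp : ‖y - (c + r⁻¹ • v)‖ ^ 2
        = ‖y - c‖ ^ 2 - 2 * (r⁻¹ * (inner ℝ (y - c) v : ℝ)) + r⁻¹ ^ 2 * ‖v‖ ^ 2 := by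
      have hd : y - (c + r⁻¹ • v) = (y - c) - r⁻¹ • v := by abel
      rw [hd, norm_sub_sq_real, real_inner_smul_right, norm_smul, Real.norm_eq_abs,
        abs_of_pos (inv_pos.2 hr)]
      ring
    have hic : (inner ℝ (y - c) v : ℝ) = (inner ℝ v (y - c) : ℝ) := real_inner_comm _ _
    rw [hexp, hic]
    have hnn : 0 ≤ r / 2 * ‖y - c‖ ^ 2 := by positivity
    have hrr : r / 2 * (r⁻¹ ^ 2 * ‖v‖ ^ 2) = ‖v‖ ^ 2 / (2 * r) := by
      field_simp
    have hcanc : r / 2 * (2 * (r⁻¹ * (inner ℝ v (y - c) : ℝ))) = (inner ℝ v (y - c) : ℝ) := by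
      field_simp
    nlinarith [hsub, hnn, hrr, hcanc]


/-- `f` is essentially strictly convex iff its Moreau envelope is strictly convex. -/
theorem essStrictConvex_iff_moreau_strictConvex {n : ℕ}
    (f : EuclideanSpace ℝ (Fin n) → EReal) (hlsc : LowerSemicontinuous f)
    (hproper : ∃ x, f x ≠ ⊤) (hnb : ∀ x, f x ≠ ⊥) (hconv : EConvexOn f)
    (r : ℝ) (hr : 0 < r) :
    (∀ s : Set (EuclideanSpace ℝ (Fin n)),
        s ⊆ {x | ∃ v, ESubdiff f x v} → Convex ℝ s → EStrictConvexOn s f) ↔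
      EStrictConvexOn Set.univ
        (fun x => ⨅ y, f y + (((r / 2) * ‖y - x‖ ^ 2 : ℝ) : EReal)) := by
  obtain ⟨w, cmin, hmin⟩ := exists_affine_minorant f hlsc hproper hnb hconv
  obtain ⟨x0, hx0⟩ := hproper
  constructor
  · -- essential strict convexity ⇒ strict convexity of the envelope
    intro hess
    intro x _ y _ hxy θ hθ0 hθ1
    dsimp only
    obtain ⟨p, hp, hfp⟩ := exists_prox f hlsc hnb w cmin hmin x0 hx0 r hr x
    obtain ⟨q, hq, hfq⟩ := exists_prox f hlsc hnb w cmin hmin x0 hx0 r hr y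
    have hfa : f p = ((f p).toReal : EReal) := (EReal.coe_toReal hfp (hnb p)).symm
    have hfb : f q = ((f q).toReal : EReal) := (EReal.coe_toReal hfq (hnb q)).symm
    set a : ℝ := (f p).toReal
    set b : ℝ := (f q).toReal
    have hex : (⨅ z, f z + ((r / 2 * ‖z - x‖ ^ 2 : ℝ) : EReal))
        = ((a + r / 2 * ‖p - x‖ ^ 2 : ℝ) : EReal) := by
      apply le_antisymm
      · apply iInf_le_of_le p
        rw [hfa, ← EReal.coe_add]
      · apply le_iInf; intro z
        have := hp z
        rw [hfa, ← EReal.coe_add] at this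
        exact this
    have hey : (⨅ z, f z + ((r / 2 * ‖z - y‖ ^ 2 : ℝ) : EReal))
        = ((b + r / 2 * ‖q - y‖ ^ 2 : ℝ) : EReal) := by
      apply le_antisymm
      · apply iInf_le_of_le q
        rw [hfb, ← EReal.coe_add]
      · apply le_iInf; intro z
        have := hq z
        rw [hfb, ← EReal.coe_add] at this
        exact this
    rw [hex, hey]
    set m : EuclideanSpace ℝ (Fin n) := θ • x + (1 - θ) • y with hm
    set pm : EuclideanSpace ℝ (Fin n) := θ • p + (1 - θ) • q with hpmdef
    have hem : (⨅ z, f z + ((r / 2 * ‖z - m‖ ^ 2 : ℝ) : EReal))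
        ≤ f pm + ((r / 2 * ‖pm - m‖ ^ 2 : ℝ) : EReal) := iInf_le _ pm
    have hpmm : pm - m = θ • (p - x) + (1 - θ) • (q - y) := by
      rw [hpmdef, hm]; module
    by_cases hdq : p - x = q - y
    · -- the prox displacements agree: use essential strict convexity on the segment
      have hxp : x - p = y - q := by
        rw [← neg_sub p x, hdq, neg_sub]
      have hvp := prox_subdiff f hnb hconv r hr x p hp hfp
      have hvq' := prox_subdiff f hnb hconv r hr y q hq hfq
      have hvq : ESubdiff f q (r • (x - p)) := by rw [hxp]; exact hvq'
      have hpq : p ≠ q := by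
        intro h
        apply hxy
        rw [h] at hdq
        exact (sub_right_inj.1 hdq)
      have hsegsub : segment ℝ p q ⊆ {z | ∃ v, ESubdiff f z v} := by
        rintro z ⟨t1, t2, ht1, ht2, hsum, rfl⟩
        have ht2' : t2 = 1 - t1 := by linarith
        subst ht2'
        exact ⟨_, subdiff_segment f hnb hconv p q _ hvp hvq t1 ht1 (by linarith)⟩
      have hstrict := hess (segment ℝ p q) hsegsub (convex_segment p q) p
        (left_mem_segment ℝ p q) q (right_mem_segment ℝ p q) hpq θ hθ0 hθ1
      rw [hfa, hfb] at hstrict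
      have hstrict' : f pm < ((θ * a + (1 - θ) * b : ℝ) : EReal) := by
        rw [EReal.coe_add, EReal.coe_mul, EReal.coe_mul]
        exact hstrict
      have hnormeq : ‖q - y‖ = ‖p - x‖ := by rw [hdq]
      have hpmm2 : pm - m = p - x := by
        rw [hpmm, ← hdq]; module
      calc (⨅ z, f z + ((r / 2 * ‖z - m‖ ^ 2 : ℝ) : EReal))
          ≤ f pm + ((r / 2 * ‖pm - m‖ ^ 2 : ℝ) : EReal) := hem
        _ < ((θ * a + (1 - θ) * b : ℝ) : EReal) + ((r / 2 * ‖pm - m‖ ^ 2 : ℝ) : EReal) :=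
            EReal.add_lt_add_right_coe hstrict' _
        _ = ((θ * (a + r / 2 * ‖p - x‖ ^ 2) + (1 - θ) * (b + r / 2 * ‖q - y‖ ^ 2) : ℝ) : EReal) := by
            rw [← EReal.coe_add, EReal.coe_eq_coe_iff, hpmm2, hnormeq]
            ring
        _ = ((θ : ℝ) : EReal) * ((a + r / 2 * ‖p - x‖ ^ 2 : ℝ) : EReal)
            + (((1 - θ : ℝ)) : EReal) * ((b + r / 2 * ‖q - y‖ ^ 2 : ℝ) : EReal) := by
            norm_cast
    · -- distinct displacements: strict convexity of the quadratic term
      have hcv : f pm ≤ ((θ * a + (1 - θ) * b : ℝ) : EReal) := by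
        have := hconv p q θ hθ0.le hθ1.le
        rw [hfa, hfb] at this
        rw [EReal.coe_add, EReal.coe_mul, EReal.coe_mul]
        exact this
      have hq2 : ‖pm - m‖ ^ 2 < θ * ‖p - x‖ ^ 2 + (1 - θ) * ‖q - y‖ ^ 2 := by
        rw [hpmm]
        exact normsq_strict_convex hdq hθ0 hθ1
      calc (⨅ z, f z + ((r / 2 * ‖z - m‖ ^ 2 : ℝ) : EReal))
          ≤ f pm + ((r / 2 * ‖pm - m‖ ^ 2 : ℝ) : EReal) := hem
        _ ≤ ((θ * a + (1 - θ) * b + r / 2 * ‖pm - m‖ ^ 2 : ℝ) : EReal) := by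
            rw [EReal.coe_add]
            exact add_le_add hcv le_rfl
        _ < ((θ * (a + r / 2 * ‖p - x‖ ^ 2) + (1 - θ) * (b + r / 2 * ‖q - y‖ ^ 2) : ℝ) : EReal) := by
            rw [EReal.coe_lt_coe_iff]
            nlinarith [hq2, hr]
        _ = ((θ : ℝ) : EReal) * ((a + r / 2 * ‖p - x‖ ^ 2 : ℝ) : EReal)
            + (((1 - θ : ℝ)) : EReal) * ((b + r / 2 * ‖q - y‖ ^ 2 : ℝ) : EReal) := by
            norm_cast
  · -- strict convexity of the envelope ⇒ essential strict convexity
    intro hmsc s hs hsconv x hx y hy hxy θ hθ0 hθ1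
    obtain ⟨vx0, hvx0⟩ := hs hx
    obtain ⟨vy0, hvy0⟩ := hs hy
    have hfxt : f x ≠ ⊤ := subdiff_finite f ⟨x0, hx0⟩ x vx0 hvx0
    have hfyt : f y ≠ ⊤ := subdiff_finite f ⟨x0, hx0⟩ y vy0 hvy0
    have hfa : f x = ((f x).toReal : EReal) := (EReal.coe_toReal hfxt (hnb x)).symm
    have hfb : f y = ((f y).toReal : EReal) := (EReal.coe_toReal hfyt (hnb y)).symm
    set a : ℝ := (f x).toReal
    set b : ℝ := (f y).toReal
    set m : EuclideanSpace ℝ (Fin n) := θ • x + (1 - θ) • y with hm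
    have hmem : m ∈ s := hsconv hx hy hθ0.le (by linarith) (by ring)
    obtain ⟨v, hv⟩ := hs hmem
    have hfmt : f m ≠ ⊤ := subdiff_finite f ⟨x0, hx0⟩ m v hv
    by_contra hnot
    have hle := hconv x y θ hθ0.le hθ1.le
    rw [hfa, hfb] at hle hnot
    have heqm : f m = ((θ * a + (1 - θ) * b : ℝ) : EReal) := by
      rw [EReal.coe_add, EReal.coe_mul, EReal.coe_mul]
      exact le_antisymm hle (not_lt.1 hnot)
    set ip : ℝ := (inner ℝ v (x - y) : ℝ) with hip
    have hxm : x - m = (1 - θ) • (x - y) := by rw [hm]; module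
    have hym : y - m = (-θ) • (x - y) := by rw [hm]; module
    have h1 : θ * a + (1 - θ) * b + (1 - θ) * ip ≤ a := by
      have := hv x
      rw [heqm, hfa, hxm, real_inner_smul_right, ← EReal.coe_add, EReal.coe_le_coe_iff] at this
      exact this
    have h2 : θ * a + (1 - θ) * b + (-θ) * ip ≤ b := by
      have := hv y
      rw [heqm, hfb, hym, real_inner_smul_right, ← EReal.coe_add, EReal.coe_le_coe_iff] at this
      exact this
    have hipval : ip = a - b := by nlinarith [h1, h2, hθ0, hθ1]
    -- v is a subgradient at x and at y as well
    have hvx : ESubdiff f x v := by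
      intro z
      by_cases hz : f z = ⊤
      · rw [hz]; exact le_top
      have hfz : f z = ((f z).toReal : EReal) := (EReal.coe_toReal hz (hnb z)).symm
      have hz1 : θ * a + (1 - θ) * b + (inner ℝ v (z - m) : ℝ) ≤ (f z).toReal := by
        have := hv z
        rw [heqm, hfz, ← EReal.coe_add, EReal.coe_le_coe_iff] at this
        exact this
      have hzx : (inner ℝ v (z - x) : ℝ) = (inner ℝ v (z - m) : ℝ) - (1 - θ) * ip := by
        have h' : z - x = (z - m) - ((1 - θ) • (x - y)) := by rw [← hxm]; abel
        rw [h', inner_sub_right, real_inner_smul_right]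
      rw [hfa, hfz, ← EReal.coe_add, EReal.coe_le_coe_iff, hzx, hipval]
      linarith
    have hvy : ESubdiff f y v := by
      intro z
      by_cases hz : f z = ⊤
      · rw [hz]; exact le_top
      have hfz : f z = ((f z).toReal : EReal) := (EReal.coe_toReal hz (hnb z)).symm
      have hz1 : θ * a + (1 - θ) * b + (inner ℝ v (z - m) : ℝ) ≤ (f z).toReal := by
        have := hv z
        rw [heqm, hfz, ← EReal.coe_add, EReal.coe_le_coe_iff] at this
        exact this
      have hzy : (inner ℝ v (z - y) : ℝ) = (inner ℝ v (z - m) : ℝ) - (-θ) * ip := by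
        have h' : z - y = (z - m) - ((-θ) • (x - y)) := by rw [← hym]; abel
        rw [h', inner_sub_right, real_inner_smul_right]
      rw [hfb, hfz, ← EReal.coe_add, EReal.coe_le_coe_iff, hzy, hipval]
      linarith
    -- evaluate the envelope along the shifted segment
    have e1 := env_of_subdiff f hnb r hr x v hvx hfxt
    have e2 := env_of_subdiff f hnb r hr y v hvy hfyt
    have e3 := env_of_subdiff f hnb r hr m v hv hfmt
    set k : ℝ := ‖v‖ ^ 2 / (2 * r) with hk
    have hmod : θ • (x + r⁻¹ • v) + (1 - θ) • (y + r⁻¹ • v) = m + r⁻¹ • v := by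
      rw [hm]; module
    have hne : x + r⁻¹ • v ≠ y + r⁻¹ • v := by
      intro h
      exact hxy (by simpa using h)
    have hkey := hmsc (x + r⁻¹ • v) (Set.mem_univ _) (y + r⁻¹ • v) (Set.mem_univ _) hne θ hθ0 hθ1
    dsimp only at hkey
    rw [hmod, e1, e2, e3, hfa, hfb, heqm] at hkey
    rw [← EReal.coe_add, ← EReal.coe_add, ← EReal.coe_add, ← EReal.coe_mul, ← EReal.coe_mul,
      ← EReal.coe_add, EReal.coe_lt_coe_iff] at hkey
    nlinarith [hkey]
end

section
/- Let f ∈ Γ₀(ℝⁿ) be of class C^k on ℝⁿ with k ≥ 1. Then for any r > 0, the Moreau envelope e_r f is of class C^k. -/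
open Filter Topology Set
open scoped RealInnerProductSpace

section aux
variable {E : Type*} [NormedAddCommGroup E] [InnerProductSpace ℝ E]

lemma convex_fderiv_ineq (f : E → ℝ) (hconv : ConvexOn ℝ Set.univ f) {φ : E →L[ℝ] ℝ} {a : E}
    (hd : HasFDerivAt f φ a) (b : E) : f a + φ (b - a) ≤ f b := by
  have h1 : HasDerivAt (fun t : ℝ => a + t • (b - a)) (b - a) 0 := by
    simpa using ((hasDerivAt_id (0:ℝ)).smul_const (b - a)).const_add a
  have hd' : HasFDerivAt f φ (a + (0:ℝ) • (b - a)) := by simpa using hd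
  have h2 : HasDerivAt (fun t : ℝ => f (a + t • (b - a))) (φ (b - a)) 0 :=
    hd'.comp_hasDerivAt 0 h1
  have hφconv : ConvexOn ℝ Set.univ (fun t : ℝ => f (a + t • (b - a))) := by
    have := hconv.comp_affineMap (AffineMap.lineMap a b)
    simp only [Set.preimage_univ] at this
    have heq : (fun t : ℝ => f (a + t • (b - a))) = f ∘ AffineMap.lineMap a b := by
      funext t
      rw [Function.comp_apply, AffineMap.lineMap_apply_module', add_comm]
    rw [heq]; exact this
  have h3 := hφconv.le_slope_of_hasDerivAt (Set.mem_univ (0:ℝ)) (Set.mem_univ (1:ℝ))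
    zero_lt_one h2
  rw [slope_def_field] at h3
  simp at h3
  linarith [φ.map_sub b a]

lemma moreau_exists_min [FiniteDimensional ℝ E] (f : E → ℝ) (hconv : ConvexOn ℝ Set.univ f)
    (hf : Differentiable ℝ f) (r : ℝ) (hr : 0 < r) (x : E) :
    ∃ p : E, ∀ y : E, f p + r / 2 * ‖p - x‖ ^ 2 ≤ f y + r / 2 * ‖y - x‖ ^ 2 := by
  have hcont : Continuous (fun y => f y + r / 2 * ‖y - x‖ ^ 2) := by
    exact hf.continuous.add (by fun_prop)
  set c := ‖fderiv ℝ f 0‖ with hc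
  set d := c + r * ‖x‖ with hd
  have htend : Tendsto (fun t : ℝ => (f 0 + r / 2 * ‖x‖ ^ 2) + t * (r / 2 * t - d))
      atTop atTop := by
    apply tendsto_atTop_add_const_left
    apply Filter.Tendsto.atTop_mul_atTop₀ tendsto_id
    have h1 : Tendsto (fun t : ℝ => r / 2 * t) atTop atTop :=
      Tendsto.const_mul_atTop (by positivity) tendsto_id
    simpa [sub_eq_add_neg] using tendsto_atTop_add_const_right atTop (-d) h1
  have hlow : ∀ y : E, (f 0 + r / 2 * ‖x‖ ^ 2) + ‖y‖ * (r / 2 * ‖y‖ - d)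
      ≤ f y + r / 2 * ‖y - x‖ ^ 2 := by
    intro y
    have h1 : f 0 + (fderiv ℝ f 0) (y - 0) ≤ f y :=
      convex_fderiv_ineq f hconv (hf 0).hasFDerivAt y
    simp only [sub_zero] at h1
    have h2 : |(fderiv ℝ f 0) y| ≤ c * ‖y‖ := by
      simpa [Real.norm_eq_abs] using (fderiv ℝ f 0).le_opNorm y
    have h3 : (‖y‖ - ‖x‖) ^ 2 ≤ ‖y - x‖ ^ 2 := by
      have := abs_norm_sub_norm_le y x
      nlinarith [abs_nonneg (‖y‖ - ‖x‖), sq_abs (‖y‖ - ‖x‖), neg_abs_le (‖y‖ - ‖x‖)]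
    have h4 := abs_le.mp h2
    nlinarith [norm_nonneg y, norm_nonneg x]
  have htends : Tendsto (fun y => f y + r / 2 * ‖y - x‖ ^ 2) (cocompact E) atTop :=
    tendsto_atTop_mono hlow (htend.comp tendsto_norm_cocompact_atTop)
  exact hcont.exists_forall_le htends

noncomputable def fromDual (E : Type*) [NormedAddCommGroup E] [InnerProductSpace ℝ E]
    [CompleteSpace E] : (E →L[ℝ] ℝ) ≃L[ℝ] E :=
  { toFun := fun φ => (InnerProductSpace.toDual ℝ E).symm φ
    invFun := fun v => InnerProductSpace.toDual ℝ E v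
    map_add' := by intros; simp
    map_smul' := by
      intro c φ
      simp [LinearIsometryEquiv.map_smulₛₗ, starRingEnd_apply]
    left_inv := fun φ => by simp
    right_inv := fun v => by simp
    continuous_toFun := (InnerProductSpace.toDual ℝ E).symm.continuous
    continuous_invFun := (InnerProductSpace.toDual ℝ E).continuous }

@[simp] lemma inner_fromDual {E : Type*} [NormedAddCommGroup E] [InnerProductSpace ℝ E]
    [CompleteSpace E] (φ : E →L[ℝ] ℝ) (w : E) : ⟪fromDual E φ, w⟫ = φ w := by
  show ⟪(InnerProductSpace.toDual ℝ E).symm φ, w⟫ = φ w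
  simp

@[simp] lemma fromDual_symm_apply {E : Type*} [NormedAddCommGroup E] [InnerProductSpace ℝ E]
    [CompleteSpace E] (v w : E) : (fromDual E).symm v w = ⟪v, w⟫ := rfl

end aux

set_option maxHeartbeats 1000000 in
theorem moreau_aux {E : Type*} [NormedAddCommGroup E] [InnerProductSpace ℝ E]
    [FiniteDimensional ℝ E] (f : E → ℝ) (hconv : ConvexOn ℝ Set.univ f) (k : ℕ) (hk : 1 ≤ k)
    (hf : ContDiff ℝ (k : ℕ∞) f) (r : ℝ) (hr : 0 < r) :
    ContDiff ℝ (k : ℕ∞) (fun x => ⨅ y, f y + (r / 2) * ‖y - x‖ ^ 2) := by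
  obtain ⟨j, rfl⟩ : ∃ j, k = j + 1 := ⟨k - 1, by omega⟩
  have hfd : Differentiable ℝ f := hf.differentiable (by simp)
  set g : E → E := fun y => fromDual E (fderiv ℝ f y) with hg
  have hginner : ∀ y w, ⟪g y, w⟫ = fderiv ℝ f y w := fun y w => inner_fromDual _ _
  have hgsmooth : ContDiff ℝ (j : ℕ∞) g :=
    (fromDual E).contDiff.comp (hf.fderiv_right (by exact_mod_cast le_refl _))
  have hmono : ∀ a b : E, 0 ≤ ⟪g a - g b, a - b⟫ := by
    intro a b
    have h1 := convex_fderiv_ineq f hconv (hfd a).hasFDerivAt b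
    have h2 := convex_fderiv_ineq f hconv (hfd b).hasFDerivAt a
    have e1 : (fderiv ℝ f a) (a - b) = -((fderiv ℝ f a) (b - a)) := by
      rw [← neg_sub, map_neg]
    rw [inner_sub_left, hginner, hginner]
    linarith
  set F : E → E := fun y => y + r⁻¹ • g y with hF
  have hFsmooth : ContDiff ℝ (j : ℕ∞) F := contDiff_id.add (hgsmooth.const_smul _)
  have hkey : ∀ a b : E, ‖a - b‖ ^ 2 ≤ ⟪F a - F b, a - b⟫ := by
    intro a b
    have e : F a - F b = (a - b) + r⁻¹ • (g a - g b) := by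
      simp only [hF, smul_sub]; abel
    rw [e, inner_add_left, real_inner_smul_left, real_inner_self_eq_norm_sq]
    have := hmono a b
    have hrinv : (0:ℝ) ≤ r⁻¹ := by positivity
    nlinarith
  have hexp : ∀ a b : E, ‖a - b‖ ≤ ‖F a - F b‖ := by
    intro a b
    rcases eq_or_ne a b with rfl | hab
    · simp
    · have h1 := hkey a b
      have h2 := real_inner_le_norm (F a - F b) (a - b)
      have h3 : 0 < ‖a - b‖ := by
        rw [norm_pos_iff]; exact sub_ne_zero.mpr hab
      nlinarith
  have hFinj : Function.Injective F := by
    intro a b hab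
    have := hexp a b
    rw [hab, sub_self, norm_zero] at this
    have : ‖a - b‖ = 0 := le_antisymm this (norm_nonneg _)
    rwa [norm_eq_zero, sub_eq_zero] at this
  choose p hp using moreau_exists_min f hconv hfd r hr
  have hFp : ∀ x, F (p x) = x := by
    intro x
    have hmin : IsLocalMin (fun y => f y + r / 2 * ‖y - x‖ ^ 2) (p x) :=
      Filter.Eventually.of_forall (hp x)
    have hq : HasFDerivAt (fun y : E => r / 2 * ‖y - x‖ ^ 2)
        ((r / 2) • (2 • (innerSL ℝ (p x - x)).comp (ContinuousLinearMap.id ℝ E))) (p x) := by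
      have h0 : HasFDerivAt (fun y : E => y - x) (ContinuousLinearMap.id ℝ E) (p x) :=
        (hasFDerivAt_id (p x)).sub_const x
      exact (h0.norm_sq).const_mul (r / 2)
    have htot := (hfd (p x)).hasFDerivAt.add hq
    have hD : fderiv ℝ f (p x)
        + (r / 2) • (2 • (innerSL ℝ (p x - x)).comp (ContinuousLinearMap.id ℝ E)) = 0 := by
      rw [← htot.fderiv]
      exact hmin.fderiv_eq_zero
    set w : E := g (p x) + r • (p x - x) with hw
    have happ := congrArg (fun T : E →L[ℝ] ℝ => T w) hD
    simp only [ContinuousLinearMap.add_apply, ContinuousLinearMap.smul_apply,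
      ContinuousLinearMap.coe_comp', Function.comp_apply, ContinuousLinearMap.coe_id', id_eq,
      innerSL_apply_apply, ContinuousLinearMap.zero_apply, smul_eq_mul, nsmul_eq_mul,
      Nat.cast_ofNat] at happ
    have hzero : w = 0 := by
      have hinner : ⟪w, w⟫ = 0 := by
        rw [hw, inner_add_left, hginner, real_inner_smul_left]
        linarith
      exact inner_self_eq_zero.mp hinner
    have hgpx : g (p x) = r • (x - p x) := by
      have : g (p x) = -(r • (p x - x)) := by
        rw [eq_neg_iff_add_eq_zero]; exact hzero
      rw [this, ← smul_neg, neg_sub]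
    show p x + r⁻¹ • g (p x) = x
    rw [hgpx, smul_smul, inv_mul_cancel₀ hr.ne', one_smul, add_sub_cancel]
  have hpx : ∀ x y, F y = x → y = p x := fun x y h => hFinj (h.trans (hFp x).symm)
  have hplip : ∀ a b, ‖p a - p b‖ ≤ ‖a - b‖ := by
    intro a b
    have := hexp (p a) (p b)
    rwa [hFp, hFp] at this
  set m : E → ℝ := fun x => f (p x) + r / 2 * ‖p x - x‖ ^ 2 with hm
  have hiInf : (fun x : E => ⨅ y, f y + r / 2 * ‖y - x‖ ^ 2) = m := by
    funext x
    refine le_antisymm ?_ (le_ciInf (hp x))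
    exact ciInf_le ⟨f (p x) + r / 2 * ‖p x - x‖ ^ 2, by rintro v ⟨y, rfl⟩; exact hp x y⟩ (p x)
  rw [hiInf]
  have hderiv : ∀ x, HasFDerivAt m ((fromDual E).symm (r • (x - p x))) x := by
    intro x
    have hbound : ∀ x' : E,
        |m x' - m x - ((fromDual E).symm (r • (x - p x))) (x' - x)| ≤ 2 * r * ‖x' - x‖ ^ 2 := by
      intro x'
      have hmx : m x = f (p x) + r / 2 * ‖p x - x‖ ^ 2 := by rw [hm]
      have hmx' : m x' = f (p x') + r / 2 * ‖p x' - x'‖ ^ 2 := by rw [hm]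
      have u1 : m x' ≤ f (p x) + r / 2 * ‖p x - x'‖ ^ 2 := by
        rw [hmx']; exact hp x' (p x)
      have u2 : m x ≤ f (p x') + r / 2 * ‖p x' - x‖ ^ 2 := by
        rw [hmx]; exact hp x (p x')
      have hD : ((fromDual E).symm (r • (x - p x))) (x' - x) = -(r * ⟪p x - x, x' - x⟫) := by
        rw [fromDual_symm_apply, real_inner_smul_left]
        have hneg : x - p x = -(p x - x) := by abel
        rw [hneg, inner_neg_left]
        ring
      have e1 : ‖p x - x'‖ ^ 2 = ‖p x - x‖ ^ 2 - 2 * ⟪p x - x, x' - x⟫ + ‖x' - x‖ ^ 2 := by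
        have h : p x - x' = (p x - x) - (x' - x) := by abel
        rw [h, norm_sub_sq_real]
      have e2 : ‖p x' - x‖ ^ 2 = ‖p x' - x'‖ ^ 2 + 2 * ⟪p x' - x', x' - x⟫ + ‖x' - x‖ ^ 2 := by
        have h : p x' - x = (p x' - x') + (x' - x) := by abel
        rw [h, norm_add_sq_real]
      have e3 : p x' - x' = (p x' - p x) + (p x - x) - (x' - x) := by abel
      have e4 : ⟪p x' - x', x' - x⟫
          = ⟪p x' - p x, x' - x⟫ + ⟪p x - x, x' - x⟫ - ‖x' - x‖ ^ 2 := by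
        rw [e3, inner_sub_left, inner_add_left, real_inner_self_eq_norm_sq]
      have e5 : |⟪p x' - p x, x' - x⟫| ≤ ‖x' - x‖ * ‖x' - x‖ :=
        (abs_real_inner_le_norm _ _).trans
          (mul_le_mul_of_nonneg_right (hplip _ _) (norm_nonneg _))
      have e5' := abs_le.mp e5
      clear_value m g F
      clear hm hg hF hf hgsmooth hFsmooth hiInf hkey hexp hFinj hmono hginner hFp hpx hp hplip hfd hconv
      rw [hD]
      rw [abs_le]
      have h1 : r / 2 * ‖p x' - x‖ ^ 2
          = r / 2 * ‖p x' - x'‖ ^ 2 + r * ⟪p x' - x', x' - x⟫ + r / 2 * ‖x' - x‖ ^ 2 := by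
        rw [e2]; ring
      have h2 : r * ⟪p x' - x', x' - x⟫
          = r * ⟪p x' - p x, x' - x⟫ + r * ⟪p x - x, x' - x⟫ - r * ‖x' - x‖ ^ 2 := by
        rw [e4]; ring
      have hJ2 : r * ⟪p x' - p x, x' - x⟫ ≤ r * (‖x' - x‖ * ‖x' - x‖) :=
        mul_le_mul_of_nonneg_left e5'.2 hr.le
      have h3 : r * (‖x' - x‖ * ‖x' - x‖) = r * ‖x' - x‖ ^ 2 := by ring
      have h4 : r / 2 * ‖p x - x'‖ ^ 2
          = r / 2 * ‖p x - x‖ ^ 2 - r * ⟪p x - x, x' - x⟫ + r / 2 * ‖x' - x‖ ^ 2 := by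
        rw [e1]; ring
      have h5 : 0 ≤ r * ‖x' - x‖ ^ 2 := mul_nonneg hr.le (sq_nonneg _)
      have t1 : m x ≤ m x' + r * ⟪p x' - x', x' - x⟫ + r / 2 * ‖x' - x‖ ^ 2 := by
        linarith only [u2, hmx', h1]
      have t2 : r * ⟪p x' - x', x' - x⟫ ≤ r * ⟪p x - x, x' - x⟫ := by
        linarith only [h2, hJ2, h3]
      have t3 : m x' ≤ m x - r * ⟪p x - x, x' - x⟫ + r / 2 * ‖x' - x‖ ^ 2 := by
        linarith only [u1, hmx, h4]
      constructor
      · nlinarith [t1, t2, h5]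
      · nlinarith [t3, h5]
    rw [hasFDerivAt_iff_isLittleO_nhds_zero]
    have hO : (fun h : E => m (x + h) - m x - ((fromDual E).symm (r • (x - p x))) h)
        =O[𝓝 0] fun h : E => ‖h‖ * ‖h‖ := by
      apply Asymptotics.IsBigO.of_bound (2 * r)
      filter_upwards with h
      rw [Real.norm_eq_abs, Real.norm_eq_abs,
        abs_of_nonneg (by positivity : (0:ℝ) ≤ ‖h‖ * ‖h‖)]
      calc |m (x + h) - m x - ((fromDual E).symm (r • (x - p x))) h|
          = |m (x + h) - m x - ((fromDual E).symm (r • (x - p x))) (x + h - x)| := by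
            rw [add_sub_cancel_left]
        _ ≤ 2 * r * ‖x + h - x‖ ^ 2 := hbound (x + h)
        _ = 2 * r * (‖h‖ * ‖h‖) := by rw [add_sub_cancel_left]; ring
    apply hO.trans_isLittleO
    rw [Asymptotics.isLittleO_iff]
    intro c hc
    rw [Metric.eventually_nhds_iff]
    refine ⟨c, hc, fun {h} hlt => ?_⟩
    rw [dist_zero_right] at hlt
    rw [Real.norm_eq_abs, abs_of_nonneg (by positivity : (0:ℝ) ≤ ‖h‖ * ‖h‖)]
    nlinarith [norm_nonneg h, le_of_lt hlt]
  have hpsmooth : ContDiff ℝ (j : ℕ∞) p := by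
    have hplipw : LipschitzWith 1 p := LipschitzWith.of_dist_le_mul fun a b => by
      rw [dist_eq_norm, dist_eq_norm, NNReal.coe_one, one_mul]; exact hplip a b
    rcases Nat.eq_zero_or_pos j with hj0 | hjpos
    · subst hj0
      exact_mod_cast contDiff_zero.mpr hplipw.continuous
    · have hj1 : ((j : ℕ∞) : WithTop ℕ∞) ≠ 0 := by exact_mod_cast hjpos.ne'
      rw [contDiff_iff_contDiffAt]
      intro x
      have hFdiff : DifferentiableAt ℝ F (p x) := (hFsmooth.differentiable hj1) (p x)
      set A := fderiv ℝ F (p x) with hA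
      have hAv : ∀ v : E, ‖v‖ ^ 2 ≤ ⟪A v, v⟫ := by
        intro v
        have hline : HasDerivAt (fun t : ℝ => p x + t • v) v 0 := by
          simpa using ((hasDerivAt_id (0:ℝ)).smul_const v).const_add (p x)
        have hF0 : HasFDerivAt F A (p x + (0:ℝ) • v) := by simpa using hFdiff.hasFDerivAt
        have hφ : HasDerivAt (fun t : ℝ => F (p x + t • v)) (A v) 0 := by
          simpa [Function.comp_def] using hF0.comp_hasDerivAt (0:ℝ) hline
        have hslope := hasDerivAt_iff_tendsto_slope.mp hφ
        have h2 : Tendsto (fun t : ℝ => ⟪slope (fun s : ℝ => F (p x + s • v)) 0 t, v⟫)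
            (𝓝[>] (0:ℝ)) (𝓝 ⟪A v, v⟫) := by
          apply Tendsto.inner (hslope.mono_left (nhdsWithin_mono _ ?_)) tendsto_const_nhds
          intro t ht
          exact ne_of_gt ht
        refine ge_of_tendsto h2 ?_
        filter_upwards [self_mem_nhdsWithin] with t ht
        have ht0 : (0:ℝ) < t := ht
        have hs : slope (fun s : ℝ => F (p x + s • v)) 0 t
            = t⁻¹ • (F (p x + t • v) - F (p x)) := by
          simp [slope, vsub_eq_sub]
        rw [hs, real_inner_smul_left]
        have hkey' := hkey (p x + t • v) (p x)
        rw [add_sub_cancel_left] at hkey'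
        rw [real_inner_smul_right, norm_smul, Real.norm_eq_abs, abs_of_pos ht0, mul_pow] at hkey'
        have h3 : t * ‖v‖ ^ 2 ≤ ⟪F (p x + t • v) - F (p x), v⟫ := by nlinarith
        calc ‖v‖ ^ 2 = t⁻¹ * (t * ‖v‖ ^ 2) := by field_simp
          _ ≤ t⁻¹ * ⟪F (p x + t • v) - F (p x), v⟫ :=
              mul_le_mul_of_nonneg_left h3 (by positivity)
      have hAinj : Function.Injective A := by
        intro v w hvw
        have h1 := hAv (v - w)
        rw [map_sub, hvw, sub_self, inner_zero_left] at h1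
        have h2 : ‖v - w‖ = 0 := by nlinarith [norm_nonneg (v - w), sq_nonneg ‖v - w‖]
        rwa [norm_eq_zero, sub_eq_zero] at h2
      have hAbij : Function.Bijective A :=
        ⟨hAinj, LinearMap.injective_iff_surjective.mp hAinj⟩
      let A' : E ≃L[ℝ] E := (LinearEquiv.ofBijective (A : E →ₗ[ℝ] E) hAbij).toContinuousLinearEquiv
      have hA'coe : (A' : E →L[ℝ] E) = A := by ext v; rfl
      have hci : ContDiffAt ℝ (j : ℕ∞) F (p x) := hFsmooth.contDiffAt
      have hfd' : HasFDerivAt F (A' : E →L[ℝ] E) (p x) := by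
        rw [hA'coe]; exact hFdiff.hasFDerivAt
      have hli := hci.to_localInverse (f' := A') hfd' hj1
      have hev := (hci.hasStrictFDerivAt' hfd' hj1).eventually_right_inverse (f := F)
      rw [hFp x] at hli hev
      refine hli.congr_of_eventuallyEq ?_
      filter_upwards [hev] with y hy
      exact (hpx y _ hy).symm
  have hcast : (((j + 1 : ℕ) : ℕ∞) : WithTop ℕ∞) = ((j : ℕ∞) : WithTop ℕ∞) + 1 := by
    push_cast
    rfl
  rw [hcast]
  rw [contDiff_succ_iff_fderiv]
  refine ⟨fun x => (hderiv x).differentiableAt, by simp, ?_⟩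
  have hfd_eq : (fderiv ℝ m) = fun x => (fromDual E).symm (r • (x - p x)) :=
    funext fun x => (hderiv x).fderiv
  rw [hfd_eq]
  exact (fromDual E).symm.contDiff.comp ((contDiff_id.sub hpsmooth).const_smul r)

/-- If `f` is convex and of class `C^k` on ℝⁿ (`k ≥ 1`), then `e_r f` is of class `C^k`. -/
theorem moreau_envelope_contDiff {n : ℕ} (f : EuclideanSpace ℝ (Fin n) → ℝ)
    (hconv : ConvexOn ℝ Set.univ f) (k : ℕ) (hk : 1 ≤ k)
    (hf : ContDiff ℝ (k : ℕ∞) f) (r : ℝ) (hr : 0 < r) :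
    ContDiff ℝ (k : ℕ∞) (fun x => ⨅ y, f y + (r / 2) * ‖y - x‖ ^ 2) := by
  exact moreau_aux f hconv k hk hf r hr
end

section
/- Let f₁, f₂ : ℝ → ℝ be convex and differentiable, and f the convex function equal to f₁ on (-∞, x₀] and f₂ on [x₀, ∞). Then for x in the interval [x₀ + f₁'(x₀)/r, x₀ + f₂'(x₀)/r], the Moreau envelope is e_r f(x) = f₁(x₀) + (r/2)(x₀ - x)². -/
/-- Tangent line lower bound for a convex differentiable function. -/
lemma tangent_le_of_convex {g : ℝ → ℝ} (hc : ConvexOn ℝ Set.univ g)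
    (hd : Differentiable ℝ g) (x₀ y : ℝ) :
    g x₀ + deriv g x₀ * (y - x₀) ≤ g y := by
  rcases lt_trichotomy y x₀ with h | h | h
  · have := hc.slope_le_deriv (Set.mem_univ y) (Set.mem_univ x₀) h (hd x₀)
    rw [slope_def_field, div_le_iff₀ (by linarith)] at this
    nlinarith
  · simp [h]
  · have := hc.deriv_le_slope (Set.mem_univ x₀) (Set.mem_univ y) h (hd x₀)
    rw [slope_def_field, le_div_iff₀ (by linarith)] at this
    nlinarith

/-- Moreau envelope of a two-piece convex function on the middle region:
`e_r f (x) = f₁(x₀) + (r/2)(x₀ - x)²`. -/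
theorem moreau_envelope_two_piece_middle {f f₁ f₂ : ℝ → ℝ} {x₀ : ℝ}
    (h₁c : ConvexOn ℝ Set.univ f₁) (h₂c : ConvexOn ℝ Set.univ f₂)
    (h₁d : Differentiable ℝ f₁) (h₂d : Differentiable ℝ f₂)
    (hle : ∀ x ≤ x₀, f x = f₁ x) (hge : ∀ x, x₀ ≤ x → f x = f₂ x)
    (hconv : ConvexOn ℝ Set.univ f) (r : ℝ) (hr : 0 < r)
    (x : ℝ) (hx₁ : x₀ + deriv f₁ x₀ / r ≤ x) (hx₂ : x ≤ x₀ + deriv f₂ x₀ / r) :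
    (⨅ y, f y + r / 2 * (y - x) ^ 2) = f₁ x₀ + r / 2 * (x₀ - x) ^ 2 := by
  have hx₁' : deriv f₁ x₀ ≤ r * (x - x₀) := by
    have h' : deriv f₁ x₀ / r ≤ x - x₀ := by linarith
    rw [div_le_iff₀ hr] at h'; nlinarith
  have hx₂' : r * (x - x₀) ≤ deriv f₂ x₀ := by
    have h' : x - x₀ ≤ deriv f₂ x₀ / r := by linarith
    rw [le_div_iff₀ hr] at h'; nlinarith
  have h12 : f₁ x₀ = f₂ x₀ := by rw [← hle x₀ le_rfl, hge x₀ le_rfl]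
  have key : ∀ y, f₁ x₀ + r / 2 * (x₀ - x) ^ 2 ≤ f y + r / 2 * (y - x) ^ 2 := by
    intro y
    rcases le_total y x₀ with h | h
    · have ht := tangent_le_of_convex h₁c h₁d x₀ y
      rw [hle y h]
      nlinarith [sq_nonneg (y - x₀)]
    · have ht := tangent_le_of_convex h₂c h₂d x₀ y
      rw [hge y h, h12]
      nlinarith [sq_nonneg (y - x₀)]
  refine le_antisymm ?_ (le_ciInf key)
  have := ciInf_le ⟨_, Set.forall_mem_range.mpr key⟩ x₀
  rwa [hle x₀ le_rfl] at this
end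

section
/- Let f : ℝ → ℝ be a continuous piecewise cubic function with pieces f_i(x) = a_i x³ + b_i x² + c_i x + d_i on intervals D_i determined by breakpoints x₁ < ⋯ < x_{m-1} with f_i(x_i) = f_{i+1}(x_i). Then f is convex if and only if (i) each f_i is convex on D_i, and (ii) f_i'(x_i) ≤ f_{i+1}'(x_i) for each i < m. -/
open Set Filter Topology

private lemma slope_mid {g : ℝ → ℝ} {u v w : ℝ} (h1 : u < v) (h2 : v < w)
    (h : slope g u v ≤ slope g v w) :
    slope g u v ≤ slope g u w ∧ slope g u w ≤ slope g v w := by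
  simp only [slope_def_field] at h ⊢
  have p1 : (0:ℝ) < v - u := by linarith
  have p2 : (0:ℝ) < w - v := by linarith
  have p3 : (0:ℝ) < w - u := by linarith
  rw [div_le_div_iff₀ p1 p2] at h
  constructor
  · rw [div_le_div_iff₀ p1 p3]; nlinarith
  · rw [div_le_div_iff₀ p3 p2]; nlinarith

private lemma tendsto_slope_left {g : ℝ → ℝ} {c : ℝ} (hg : DifferentiableAt ℝ g c) :
    Tendsto (fun y => slope g y c) (𝓝[<] c) (𝓝 (deriv g c)) := by
  have h := hasDerivAt_iff_tendsto_slope.mp hg.hasDerivAt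
  have hle : 𝓝[<] c ≤ 𝓝[≠] c := nhdsWithin_mono _ fun y hy => ne_of_lt hy
  exact (h.mono_left hle).congr fun y => slope_comm g c y

private lemma tendsto_slope_right {g : ℝ → ℝ} {c : ℝ} (hg : DifferentiableAt ℝ g c) :
    Tendsto (fun y => slope g c y) (𝓝[>] c) (𝓝 (deriv g c)) :=
  (hasDerivAt_iff_tendsto_slope.mp hg.hasDerivAt).mono_left
    (nhdsWithin_mono _ fun y hy => ne_of_gt hy)

private lemma glue_convexOn {f : ℝ → ℝ} {a : ℝ} {s : Set ℝ}
    (hs : Convex ℝ s) (ha : a ∈ s)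
    (h1 : ConvexOn ℝ (s ∩ Iic a) f) (h2 : ConvexOn ℝ (s ∩ Ici a) f)
    (hsl : ∀ x ∈ s, x < a → ∀ z ∈ s, a < z → slope f x a ≤ slope f a z) :
    ConvexOn ℝ s f := by
  refine convexOn_of_slope_mono_adjacent hs ?_
  intro x y z hx hz hxy hyz
  have hy : y ∈ s := hs.ordConnected.out hx hz ⟨hxy.le, hyz.le⟩
  rcases le_or_gt z a with hza | haz
  · exact h1.slope_mono_adjacent ⟨hx, ((hxy.trans hyz).le).trans hza⟩ ⟨hz, hza⟩ hxy hyz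
  rcases le_or_gt a x with hax | hxa
  · exact h2.slope_mono_adjacent ⟨hx, hax⟩ ⟨hz, haz.le⟩ hxy hyz
  rw [← slope_def_field, ← slope_def_field]
  rcases lt_trichotomy y a with hya | hya | hya
  · have e1 : slope f x y ≤ slope f y a := by
      have h := h1.slope_mono_adjacent ⟨hx, hxa.le⟩ ⟨ha, self_mem_Iic⟩ hxy hya
      rwa [← slope_def_field, ← slope_def_field] at h
    have e2 : slope f y a ≤ slope f a z := hsl y hy hya z hz haz
    exact e1.trans (slope_mid hya haz e2).1
  · subst hya
    exact hsl x hx hxa z hz haz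
  · have e2 : slope f x a ≤ slope f a y := hsl x hx hxa y hy hya
    have e3 : slope f a y ≤ slope f y z := by
      have h := h2.slope_mono_adjacent ⟨ha, self_mem_Ici⟩ ⟨hz, haz.le⟩ hya hyz
      rwa [← slope_def_field, ← slope_def_field] at h
    exact (slope_mid hxa hya e2).2.trans e3

/-- A continuous piecewise cubic function with pieces `p 1, …, p m` separated by
breakpoints `t 1 < ⋯ < t (m-1)` is convex iff each piece is convex on its subdomain
and the one-sided derivatives satisfy `pᵢ'(tᵢ) ≤ pᵢ₊₁'(tᵢ)` at each breakpoint. -/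
theorem piecewise_cubic_convex_iff (m : ℕ) (hm : 1 ≤ m)
    (a b c d : ℕ → ℝ) (p : ℕ → ℝ → ℝ)
    (hp : ∀ i x, p i x = a i * x ^ 3 + b i * x ^ 2 + c i * x + d i)
    (t : ℕ → ℝ) (hmono : ∀ i, 1 ≤ i → i + 1 ≤ m - 1 → t i < t (i + 1))
    (hcont : ∀ i, 1 ≤ i → i ≤ m - 1 → p i (t i) = p (i + 1) (t i))
    (D : ℕ → Set ℝ)
    (hD : ∀ i, D i = {x : ℝ | (1 < i → t (i - 1) ≤ x) ∧ (i < m → x ≤ t i)})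
    (f : ℝ → ℝ)
    (hf : ∀ i, 1 ≤ i → i ≤ m → ∀ x ∈ D i, f x = p i x) :
    ConvexOn ℝ Set.univ f ↔
      ((∀ i, 1 ≤ i → i ≤ m → ConvexOn ℝ (D i) (p i)) ∧
        (∀ i, 1 ≤ i → i ≤ m - 1 → deriv (p i) (t i) ≤ deriv (p (i + 1)) (t i))) := by
  have hpdiff : ∀ i, Differentiable ℝ (p i) := by
    intro i
    have hpe : p i = fun x => a i * x ^ 3 + b i * x ^ 2 + c i * x + d i := funext (hp i)
    rw [hpe]; fun_prop
  have hDconv : ∀ i, Convex ℝ (D i) := by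
    intro i
    rw [hD]
    exact convex_iff_ordConnected.mpr
      ⟨fun x hx y hy z hz => ⟨fun h => (hx.1 h).trans hz.1, fun h => hz.2.trans (hy.2 h)⟩⟩
  have ht_left : ∀ i, 1 < i → i ≤ m - 1 → t (i - 1) < t i := by
    intro i hi1 hi2
    have h := hmono (i - 1) (by omega) (by omega)
    have e : i - 1 + 1 = i := by omega
    rwa [e] at h
  have hti_mem : ∀ i, 1 ≤ i → i ≤ m - 1 → t i ∈ D i := by
    intro i h1 h2
    rw [hD]
    exact ⟨fun h => (ht_left i h h2).le, fun _ => le_rfl⟩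
  have hti_mem' : ∀ i, 1 ≤ i → i ≤ m - 1 → t i ∈ D (i + 1) := by
    intro i h1 h2
    rw [hD]
    refine ⟨fun _ => ?_, fun h => ?_⟩
    · rw [show i + 1 - 1 = i by omega]
    · exact (hmono i h1 (by omega)).le
  constructor
  · intro hcv
    refine ⟨fun i h1 h2 =>
      (hcv.subset (subset_univ _) (hDconv i)).congr fun x hx => hf i h1 h2 x hx, ?_⟩
    intro i h1 h2
    have key : ∀ z ∈ D (i + 1), t i < z → deriv (p i) (t i) ≤ slope (p (i + 1)) (t i) z := by
      intro z hz htz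
      have hbound : ∀ᶠ x in 𝓝[<] t i, slope (p i) x (t i) ≤ slope (p (i + 1)) (t i) z := by
        have hmemD : ∀ᶠ x in 𝓝[<] t i, x ∈ D i := by
          rcases eq_or_lt_of_le h1 with h | h
          · filter_upwards [self_mem_nhdsWithin] with x (hx : x ∈ Iio (t i))
            rw [hD]; exact ⟨fun hh => absurd hh (by omega), fun _ => le_of_lt hx⟩
          · filter_upwards [Ioo_mem_nhdsLT (ht_left i h h2)] with x hx
            rw [hD]; exact ⟨fun _ => hx.1.le, fun _ => hx.2.le⟩
        filter_upwards [hmemD, self_mem_nhdsWithin] with x hxD (hxlt : x ∈ Iio (t i))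
        have hfx : f x = p i x := hf i h1 (by omega) x hxD
        have hfti : f (t i) = p i (t i) := hf i h1 (by omega) (t i) (hti_mem i h1 h2)
        have hfti' : f (t i) = p (i + 1) (t i) := hfti.trans (hcont i h1 h2)
        have hfz : f z = p (i + 1) z := hf (i + 1) (by omega) (by omega) z hz
        have h := hcv.slope_mono_adjacent (mem_univ x) (mem_univ z) hxlt htz
        rw [← slope_def_field, ← slope_def_field] at h
        calc slope (p i) x (t i) = slope f x (t i) := by
              simp [slope_def_field, hfx, hfti]
          _ ≤ slope f (t i) z := h
          _ = slope (p (i + 1)) (t i) z := by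
              simp [slope_def_field, hfz, hfti']
      exact le_of_tendsto (tendsto_slope_left ((hpdiff i).differentiableAt)) hbound
    have hmemD' : ∀ᶠ z in 𝓝[>] t i, z ∈ D (i + 1) := by
      by_cases hlast : i + 1 < m
      · filter_upwards [Ioo_mem_nhdsGT (hmono i h1 (by omega))] with z hz
        rw [hD]
        refine ⟨fun _ => ?_, fun _ => hz.2.le⟩
        rw [show i + 1 - 1 = i by omega]; exact hz.1.le
      · filter_upwards [self_mem_nhdsWithin] with z (hz : z ∈ Ioi (t i))
        rw [hD]
        exact ⟨fun _ => by rw [show i + 1 - 1 = i by omega]; exact le_of_lt hz,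
          fun h => absurd h hlast⟩
    refine ge_of_tendsto (tendsto_slope_right ((hpdiff (i + 1)).differentiableAt)) ?_
    filter_upwards [hmemD', self_mem_nhdsWithin] with z hz (hz' : z ∈ Ioi (t i))
    exact key z hz hz'
  · rintro ⟨hconv, hder⟩
    have claim : ∀ k, 1 ≤ k → k ≤ m → ConvexOn ℝ {x : ℝ | k < m → x ≤ t k} f := by
      intro k hk
      induction k, hk using Nat.le_induction with
      | base =>
        intro _
        have hD1 : D 1 = {x : ℝ | 1 < m → x ≤ t 1} := by
          rw [hD]; ext x; simp
        have h := (hconv 1 le_rfl hm).congr fun x hx => (hf 1 le_rfl hm x hx).symm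
        rwa [hD1] at h
      | succ k hk ih =>
        intro hkm
        have hkm' : k < m := by omega
        have hA0 := ih (by omega)
        have hSk : {x : ℝ | k < m → x ≤ t k} = Iic (t k) := by
          ext x
          simp only [mem_setOf_eq, mem_Iic]
          exact ⟨fun h => h hkm', fun h _ => h⟩
        rw [hSk] at hA0
        have hkm1 : k ≤ m - 1 := by omega
        have htkDk : t k ∈ D k := hti_mem k hk hkm1
        have htkDk1 : t k ∈ D (k + 1) := hti_mem' k hk hkm1
        have hB : ConvexOn ℝ (D (k + 1)) f :=
          (hconv (k + 1) (by omega) hkm).congr fun x hx => (hf (k + 1) (by omega) hkm x hx).symm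
        set s : Set ℝ := {x : ℝ | k + 1 < m → x ≤ t (k + 1)} with hs_def
        have hs : Convex ℝ s :=
          convex_iff_ordConnected.mpr ⟨fun x hx y hy z hz h => hz.2.trans (hy h)⟩
        have ha_s : t k ∈ s := by
          intro h
          exact (hmono k hk (by omega)).le
        have hIic_sub : Iic (t k) ⊆ s := by
          intro x hx h
          exact le_trans hx (hmono k hk (by omega)).le
        have e1 : s ∩ Iic (t k) = Iic (t k) := inter_eq_self_of_subset_right hIic_sub
        have e2 : s ∩ Ici (t k) = D (k + 1) := by
          rw [hD]; ext x
          simp only [mem_inter_iff, mem_setOf_eq, mem_Ici]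
          constructor
          · rintro ⟨h1x, h2x⟩
            exact ⟨fun _ => by rw [show k + 1 - 1 = k by omega]; exact h2x, h1x⟩
          · rintro ⟨h1x, h2x⟩
            refine ⟨h2x, ?_⟩
            have := h1x (by omega)
            rwa [show k + 1 - 1 = k by omega] at this
        have hsl : ∀ x ∈ s, x < t k → ∀ z ∈ s, t k < z →
            slope f x (t k) ≤ slope f (t k) z := by
          intro x hx hxk z hz hkz
          have hzD : z ∈ D (k + 1) := by
            have hz2 : z ∈ s ∩ Ici (t k) := ⟨hz, hkz.le⟩
            rwa [e2] at hz2
          have hftk : f (t k) = p k (t k) := hf k hk (by omega) (t k) htkDk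
          have hftk' : f (t k) = p (k + 1) (t k) := hftk.trans (hcont k hk hkm1)
          have hfz : f z = p (k + 1) z := hf (k + 1) (by omega) hkm z hzD
          have hr : deriv (p (k + 1)) (t k) ≤ slope f (t k) z := by
            have h := (hconv (k + 1) (by omega) hkm).deriv_le_slope htkDk1 hzD hkz
              ((hpdiff (k + 1)).differentiableAt)
            calc deriv (p (k + 1)) (t k) ≤ slope (p (k + 1)) (t k) z := h
              _ = slope f (t k) z := by simp [slope_def_field, hfz, hftk']
          have hl : slope f x (t k) ≤ deriv (p k) (t k) := by
            have hbound : ∀ᶠ y in 𝓝[<] t k, slope f x (t k) ≤ slope (p k) y (t k) := by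
              have hmemD : ∀ᶠ y in 𝓝[<] t k, y ∈ D k := by
                rcases eq_or_lt_of_le hk with h | h
                · filter_upwards [self_mem_nhdsWithin] with y (hy : y ∈ Iio (t k))
                  rw [hD]; exact ⟨fun hh => absurd hh (by omega), fun _ => le_of_lt hy⟩
                · filter_upwards [Ioo_mem_nhdsLT (ht_left k h hkm1)] with y hy
                  rw [hD]; exact ⟨fun _ => hy.1.le, fun _ => hy.2.le⟩
              filter_upwards [hmemD, Ioo_mem_nhdsLT hxk] with y hyD hy
              have hfy : f y = p k y := hf k hk (by omega) y hyD
              have hstep : slope f x (t k) ≤ slope f y (t k) := by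
                have h := hA0.secant_mono (mem_Iic.mpr le_rfl) (mem_Iic.mpr hxk.le)
                  (mem_Iic.mpr hy.2.le) hxk.ne hy.2.ne hy.1.le
                rwa [← slope_def_field, ← slope_def_field, slope_comm f (t k) x,
                  slope_comm f (t k) y] at h
              calc slope f x (t k) ≤ slope f y (t k) := hstep
                _ = slope (p k) y (t k) := by simp [slope_def_field, hfy, hftk]
            exact ge_of_tendsto (tendsto_slope_left ((hpdiff k).differentiableAt)) hbound
          exact hl.trans ((hder k hk hkm1).trans hr)
        have hA' : ConvexOn ℝ (s ∩ Iic (t k)) f := by rw [e1]; exact hA0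
        have hB' : ConvexOn ℝ (s ∩ Ici (t k)) f := by rw [e2]; exact hB
        exact glue_convexOn hs ha_s hA' hB' hsl
    have h := claim m hm le_rfl
    have huniv : {x : ℝ | m < m → x ≤ t m} = univ := by
      ext x; simp
    rwa [huniv] at h
end

section
/- Let f : ℝⁿ → ℝ be a norm, r > 0, g_r = e_r(f²), h_r = √(g_r). Then h_r is a norm on ℝⁿ: it is nonnegative, positively homogeneous, satisfies h_r(x) = 0 only if x = 0, is symmetric, and satisfies the triangle inequality. -/
section Aux

private lemma aux_decomp {n : ℕ} (x : EuclideanSpace ℝ (Fin n)) :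
    x = ∑ i, x i • EuclideanSpace.single i (1:ℝ) := by
  ext j
  have : (∑ i, x i • EuclideanSpace.single i (1:ℝ)) j
      = ∑ i, (x i • EuclideanSpace.single i (1:ℝ)) j := by
    rw [WithLp.ofLp_sum]; exact Finset.sum_apply j _ _
  rw [this]
  simp [EuclideanSpace.single_apply]

private lemma aux_coord_le {n : ℕ} (x : EuclideanSpace ℝ (Fin n)) (i : Fin n) :
    |x i| ≤ ‖x‖ := by
  rw [EuclideanSpace.norm_eq, ← Real.sqrt_sq_eq_abs]
  apply Real.sqrt_le_sqrt
  exact Finset.single_le_sum (f := fun j => ‖x j‖^2) (fun j _ => by positivity)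
    (Finset.mem_univ i) |>.trans_eq' (by simp [sq_abs])

/-- Minkowski-type inequality in two weighted coordinates. -/
private lemma aux_mink {s a b a' b' : ℝ} (hs : 0 ≤ s) :
    Real.sqrt ((a + a')^2 + s * (b + b')^2)
      ≤ Real.sqrt (a^2 + s*b^2) + Real.sqrt (a'^2 + s*b'^2) := by
  set A := Real.sqrt (a^2 + s*b^2) with hA
  set B := Real.sqrt (a'^2 + s*b'^2) with hB
  have hA0 : 0 ≤ A := Real.sqrt_nonneg _
  have hB0 : 0 ≤ B := Real.sqrt_nonneg _
  have h1 : A ^ 2 = a^2 + s*b^2 := Real.sq_sqrt (by positivity)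
  have h2 : B ^ 2 = a'^2 + s*b'^2 := Real.sq_sqrt (by positivity)
  have hcs : a*a' + s*(b*b') ≤ A * B := by
    rcases le_or_gt (a*a' + s*(b*b')) 0 with hneg | hpos
    · exact hneg.trans (mul_nonneg hA0 hB0)
    · have hsq : (a*a' + s*(b*b'))^2 ≤ (A*B)^2 := by
        nlinarith [sq_nonneg (a*b' - a'*b), mul_nonneg hs (sq_nonneg (a*b' - a'*b))]
      nlinarith [mul_nonneg hA0 hB0]
  have hle : (a + a')^2 + s * (b + b')^2 ≤ (A + B)^2 := by nlinarith
  calc Real.sqrt ((a + a')^2 + s * (b + b')^2) ≤ Real.sqrt ((A + B)^2) :=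
        Real.sqrt_le_sqrt hle
    _ = A + B := Real.sqrt_sq (by positivity)

private lemma aux_sqrt_add {a b : ℝ} (ha : 0 ≤ a) (hb : 0 ≤ b) :
    Real.sqrt (a + b) ≤ Real.sqrt a + Real.sqrt b := by
  have h1 : Real.sqrt a ^ 2 = a := Real.sq_sqrt ha
  have h2 : Real.sqrt b ^ 2 = b := Real.sq_sqrt hb
  have hle : a + b ≤ (Real.sqrt a + Real.sqrt b)^2 := by
    nlinarith [Real.sqrt_nonneg a, Real.sqrt_nonneg b, mul_nonneg (Real.sqrt_nonneg a) (Real.sqrt_nonneg b)]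
  calc Real.sqrt (a + b) ≤ Real.sqrt ((Real.sqrt a + Real.sqrt b)^2) := Real.sqrt_le_sqrt hle
    _ = _ := Real.sqrt_sq (by positivity)

end Aux

/-- If `f` is a norm on ℝⁿ, then `h_r = √(e_r(f²))` is a norm: nonnegative, positively
homogeneous, definite, symmetric, and satisfying the triangle inequality. -/
theorem sqrt_moreau_envelope_sq_norm_is_norm {n : ℕ}
    (f : EuclideanSpace ℝ (Fin n) → ℝ)
    (hdef : ∀ x, f x = 0 ↔ x = 0)
    (hhom : ∀ (c : ℝ) x, f (c • x) = |c| * f x)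
    (htri : ∀ x y, f (x + y) ≤ f x + f y)
    (r : ℝ) (hr : 0 < r)
    (h : EuclideanSpace ℝ (Fin n) → ℝ)
    (hh : ∀ x, h x = Real.sqrt (⨅ y, (f y) ^ 2 + (r / 2) * ‖y - x‖ ^ 2)) :
    (∀ x, 0 ≤ h x) ∧
    (∀ (α : ℝ), 0 < α → ∀ x, h (α • x) = α * h x) ∧
    (∀ x, h x = 0 → x = 0) ∧
    (∀ x, h (-x) = h x) ∧
    (∀ x y, h (x + y) ≤ h x + h y) := by
  -- basic facts about f
  have hf0 : f 0 = 0 := (hdef 0).mpr rfl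
  have hfneg : ∀ x, f (-x) = f x := fun x => by
    simpa using hhom (-1) x
  have hfnonneg : ∀ x, 0 ≤ f x := by
    intro x
    have h1 := htri x (-x)
    rw [add_neg_cancel, hf0, hfneg] at h1
    linarith
  -- the envelope function
  set q : EuclideanSpace ℝ (Fin n) → EuclideanSpace ℝ (Fin n) → ℝ := fun x y => f y ^ 2 + r / 2 * ‖y - x‖ ^ 2 with hq
  set g : EuclideanSpace ℝ (Fin n) → ℝ := fun x => ⨅ y, q x y with hgdef
  have hhg : ∀ x, h x = Real.sqrt (g x) := hh
  have hqnonneg : ∀ x y, 0 ≤ q x y := fun x y => by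
    have := hfnonneg y; positivity
  have hbdd : ∀ x, BddBelow (Set.range (q x)) := fun x =>
    ⟨0, fun v ⟨y, hy⟩ => hy ▸ hqnonneg x y⟩
  have hg0 : ∀ x, 0 ≤ g x := fun x => le_ciInf (hqnonneg x)
  have hgle : ∀ x y, g x ≤ q x y := fun x y => ciInf_le (hbdd x) y
  refine ⟨?_, ?_, ?_, ?_, ?_⟩
  -- nonnegativity
  · intro x; rw [hhg]; exact Real.sqrt_nonneg _
  -- positive homogeneity
  · intro α hα x
    have hα0 : α ≠ 0 := ne_of_gt hα
    have hsurj : Function.Surjective (fun z : EuclideanSpace ℝ (Fin n) => α • z) := fun w =>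
      ⟨α⁻¹ • w, by show α • α⁻¹ • w = w; rw [smul_smul, mul_inv_cancel₀ hα0, one_smul]⟩
    have hre : g (α • x) = ⨅ z, q (α • x) (α • z) := by
      rw [hgdef]
      exact (congrArg sInf (hsurj.range_comp (q (α • x)))).symm
    have hval : ∀ z, q (α • x) (α • z) = α ^ 2 * q x z := by
      intro z
      have h1 : f (α • z) = |α| * f z := hhom α z
      have h2 : ‖α • z - α • x‖ = |α| * ‖z - x‖ := by
        rw [← smul_sub, norm_smul, Real.norm_eq_abs]
      rw [hq]
      simp only [h1, h2]
      rw [mul_pow, mul_pow, sq_abs]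
      ring
    have hmul : g (α • x) = α ^ 2 * g x := by
      rw [hre]
      simp_rw [hval]
      rw [hgdef, Real.mul_iInf_of_nonneg (sq_nonneg α)]
    rw [hhg, hhg, hmul, Real.sqrt_mul (sq_nonneg α), Real.sqrt_sq_eq_abs,
      abs_of_pos hα]
  -- definiteness
  · intro x hx
    by_contra hxne
    -- f x > 0
    have hfx : 0 < f x := lt_of_le_of_ne (hfnonneg x) fun hc => hxne ((hdef x).mp hc.symm)
    -- upper bound f y ≤ C * ‖y‖
    obtain ⟨C, hCpos, hC⟩ : ∃ C : ℝ, 0 < C ∧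
        C = (∑ i, f (EuclideanSpace.single i (1:ℝ))) + 1 := by
      refine ⟨_, ?_, rfl⟩
      have : 0 ≤ ∑ i, f (EuclideanSpace.single i (1:ℝ)) :=
        Finset.sum_nonneg fun i _ => hfnonneg _
      linarith
    have hsum : ∀ (s : Finset (Fin n)) (v : Fin n → EuclideanSpace ℝ (Fin n)),
        f (∑ i ∈ s, v i) ≤ ∑ i ∈ s, f (v i) := by
      intro s
      induction s using Finset.cons_induction with
      | empty => intro v; simp [hf0]
      | cons i s his ih =>
        intro v
        rw [Finset.sum_cons, Finset.sum_cons]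
        exact (htri _ _).trans (by linarith [ih v])
    have hfC : ∀ y : EuclideanSpace ℝ (Fin n), f y ≤ C * ‖y‖ := by
      intro y
      calc f y = f (∑ i, y i • EuclideanSpace.single i (1:ℝ)) := by rw [← aux_decomp y]
        _ ≤ ∑ i, f (y i • EuclideanSpace.single i (1:ℝ)) := hsum _ _
        _ = ∑ i, |y i| * f (EuclideanSpace.single i (1:ℝ)) := by
            simp_rw [hhom]
        _ ≤ ∑ i, ‖y‖ * f (EuclideanSpace.single i (1:ℝ)) := by
            apply Finset.sum_le_sum
            intro i _
            exact mul_le_mul_of_nonneg_right (aux_coord_le y i) (hfnonneg _)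
        _ = (∑ i, f (EuclideanSpace.single i (1:ℝ))) * ‖y‖ := by
            rw [← Finset.mul_sum]; ring
        _ ≤ C * ‖y‖ := by
            apply mul_le_mul_of_nonneg_right _ (norm_nonneg y)
            rw [hC]; linarith
    -- g x = 0
    have hgx : g x = 0 := by
      rw [hhg] at hx
      exact le_antisymm (Real.sqrt_eq_zero'.mp hx) (hg0 x)
    -- but g x ≥ δ > 0
    obtain ⟨δ, hδpos, hδ⟩ : ∃ δ : ℝ, 0 < δ ∧
        δ = min ((f x)^2 / 4) (r / 2 * (f x / (2*C))^2) :=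
      ⟨_, lt_min (by positivity) (by positivity), rfl⟩
    have hδle : δ ≤ g x := by
      apply le_ciInf
      intro y
      rcases le_or_gt (f x / (2*C)) ‖y - x‖ with hcase | hcase
      · have : r / 2 * (f x / (2*C))^2 ≤ r / 2 * ‖y - x‖^2 := by
          apply mul_le_mul_of_nonneg_left _ (by positivity)
          exact pow_le_pow_left₀ (by positivity) hcase 2
        have h2 := hqnonneg x y
        have h3 : 0 ≤ f y ^ 2 := sq_nonneg _
        calc δ ≤ r / 2 * (f x / (2*C))^2 := hδ ▸ min_le_right _ _
          _ ≤ r / 2 * ‖y - x‖^2 := this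
          _ ≤ q x y := by rw [hq]; dsimp only; linarith
      · have h1 : f x ≤ f y + C * ‖y - x‖ := by
          calc f x = f (y + (x - y)) := by rw [add_sub_cancel]
            _ ≤ f y + f (x - y) := htri _ _
            _ ≤ f y + C * ‖x - y‖ := by linarith [hfC (x - y)]
            _ = f y + C * ‖y - x‖ := by rw [norm_sub_rev]
        have h2 : C * ‖y - x‖ < f x / 2 := by
          have := mul_lt_mul_of_pos_left hcase hCpos
          calc C * ‖y - x‖ < C * (f x / (2*C)) := this
            _ = f x / 2 := by field_simp
        have h3 : f x / 2 < f y := by linarith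
        have h4 : (f x)^2 / 4 ≤ f y ^ 2 := by nlinarith
        calc δ ≤ (f x)^2 / 4 := hδ ▸ min_le_left _ _
          _ ≤ f y ^ 2 := h4
          _ ≤ q x y := by rw [hq]; dsimp only; nlinarith [norm_nonneg (y - x)]
    linarith
  -- symmetry
  · intro x
    have hsurj : Function.Surjective (fun z : EuclideanSpace ℝ (Fin n) => -z) := neg_surjective
    have hre : g (-x) = ⨅ z, q (-x) (-z) := by
      rw [hgdef]
      exact (congrArg sInf (hsurj.range_comp (q (-x)))).symm
    have hval : ∀ z, q (-x) (-z) = q x z := by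
      intro z
      rw [hq]
      dsimp only
      rw [hfneg, show (-z - -x : EuclideanSpace ℝ (Fin n)) = -(z - x) by abel, norm_neg]
    have : g (-x) = g x := by rw [hre]; simp_rw [hval]; rfl
    rw [hhg, hhg, this]
  -- triangle inequality
  · intro x y
    apply le_of_forall_pos_le_add
    intro ε hε
    set εq : ℝ := (ε / 2)^2 with hεq
    have hεqpos : 0 < εq := by positivity
    obtain ⟨u, hu⟩ : ∃ u, q x u < g x + εq :=
      exists_lt_of_ciInf_lt (by linarith [hg0 x, (lt_add_iff_pos_right (g x)).mpr hεqpos])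
    obtain ⟨v, hv⟩ : ∃ v, q y v < g y + εq :=
      exists_lt_of_ciInf_lt (by linarith [hg0 y, (lt_add_iff_pos_right (g y)).mpr hεqpos])
    have step1 : g (x + y) ≤ (f u + f v)^2 + r / 2 * (‖u - x‖ + ‖v - y‖)^2 := by
      refine (hgle (x + y) (u + v)).trans ?_
      rw [hq]
      dsimp only
      have h1 : f (u + v) ≤ f u + f v := htri u v
      have h2 : ‖u + v - (x + y)‖ ≤ ‖u - x‖ + ‖v - y‖ := by
        calc ‖u + v - (x + y)‖ = ‖(u - x) + (v - y)‖ := by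
              congr 1; abel
          _ ≤ ‖u - x‖ + ‖v - y‖ := norm_add_le _ _
      have h3 : f (u + v)^2 ≤ (f u + f v)^2 :=
        pow_le_pow_left₀ (hfnonneg _) h1 2
      have h4 : ‖u + v - (x + y)‖^2 ≤ (‖u - x‖ + ‖v - y‖)^2 :=
        pow_le_pow_left₀ (norm_nonneg _) h2 2
      nlinarith
    have step2 : Real.sqrt (g (x + y)) ≤ Real.sqrt (q x u) + Real.sqrt (q y v) := by
      calc Real.sqrt (g (x + y))
          ≤ Real.sqrt ((f u + f v)^2 + r / 2 * (‖u - x‖ + ‖v - y‖)^2) :=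
            Real.sqrt_le_sqrt step1
        _ ≤ Real.sqrt (f u ^2 + r / 2 * ‖u - x‖^2)
            + Real.sqrt (f v ^2 + r / 2 * ‖v - y‖^2) := aux_mink (by positivity)
        _ = Real.sqrt (q x u) + Real.sqrt (q y v) := rfl
    have step3 : Real.sqrt (q x u) ≤ Real.sqrt (g x) + ε / 2 := by
      calc Real.sqrt (q x u) ≤ Real.sqrt (g x + εq) := Real.sqrt_le_sqrt hu.le
        _ ≤ Real.sqrt (g x) + Real.sqrt εq := aux_sqrt_add (hg0 x) hεqpos.le
        _ = Real.sqrt (g x) + ε / 2 := by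
            rw [hεq, Real.sqrt_sq (by positivity)]
    have step4 : Real.sqrt (q y v) ≤ Real.sqrt (g y) + ε / 2 := by
      calc Real.sqrt (q y v) ≤ Real.sqrt (g y + εq) := Real.sqrt_le_sqrt hv.le
        _ ≤ Real.sqrt (g y) + Real.sqrt εq := aux_sqrt_add (hg0 y) hεqpos.le
        _ = Real.sqrt (g y) + ε / 2 := by
            rw [hεq, Real.sqrt_sq (by positivity)]
    rw [hhg, hhg, hhg]
    linarith
end
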